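/- arXiv:1111.1468 — 5 statements merged into one kernel-verified Lean document; each statement's English description precedes it below -/
import Mathlib

section
/- Let Ω ⊆ ℝⁿ (n ≥ 2) be a bounded Lipschitz domain with constant M and scale r₀, let D be a relatively open subset of ∂Ω with relative boundary Λ, δ(y) = dist(y, Λ), and assume Λ is Ahlfors (n−2+ε)-regular with constant M at scales below r₀, where ε ≥ 0. Then there is a constant C > 0, depending only on n, M and ε, such that for every x ∈ Λ, every 0 < r < r₀ and every 0 < t < 2r, σ(Δ_r(x) ∩ {y ∈ ∂Ω : δ(y) < t}) ≤ C·t^{1−ε}·r^{n−2+ε}, where σ is (n−1)-dimensional Hausdorff measure restricted to ∂Ω. -/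
open MeasureTheory Metric Set
open scoped RealInnerProductSpace ENNReal NNReal

noncomputable section

/-- `Ω ⊆ ℝⁿ` is a bounded Lipschitz domain with constant `M > 0` and scale `r₀ > 0`:
`Ω` is a bounded connected open set and near every boundary point, in suitable
orthonormal affine coordinates, `Ω` is the region above the graph of an `M`-Lipschitz
function in every coordinate cylinder of size up to `100 r₀ √(1+M²)`. -/
def IsLipschitzDomain (n : ℕ) (M r₀ : ℝ) (Ω : Set (EuclideanSpace ℝ (Fin n))) : Prop :=
  IsOpen Ω ∧ IsConnected Ω ∧ Bornology.IsBounded Ω ∧ 0 < M ∧ 0 < r₀ ∧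
  ∀ x ∈ frontier Ω,
    ∃ (f : EuclideanSpace ℝ (Fin (n - 1)) →ₗᵢ[ℝ] EuclideanSpace ℝ (Fin n))
      (e : EuclideanSpace ℝ (Fin n)) (φ : EuclideanSpace ℝ (Fin (n - 1)) → ℝ),
      ‖e‖ = 1 ∧ (∀ v, (inner ℝ (f v) e : ℝ) = 0) ∧
      LipschitzWith M.toNNReal φ ∧ φ 0 = 0 ∧
      ∀ s : ℝ, 0 < s → s ≤ 100 * r₀ * Real.sqrt (1 + M ^ 2) →
        (Ω ∩ {y | ∃ v t, ‖v‖ < s ∧ |t| < (1 + M) * s ∧ y = x + f v + t • e}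
          = {y | ∃ v t, ‖v‖ < s ∧ |t| < (1 + M) * s ∧ φ v < t ∧ y = x + f v + t • e}) ∧
        (frontier Ω ∩ {y | ∃ v t, ‖v‖ < s ∧ |t| < (1 + M) * s ∧ y = x + f v + t • e}
          = {y | ∃ v t, ‖v‖ < s ∧ |t| < (1 + M) * s ∧ φ v = t ∧ y = x + f v + t • e})

/-- `D` satisfies the corkscrew condition relative to `∂Ω`. -/
def Corkscrew (n : ℕ) (M r₀ : ℝ) (D Λ : Set (EuclideanSpace ℝ (Fin n))) : Prop :=
  ∀ x ∈ Λ, ∀ r : ℝ, 0 < r → r < r₀ →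
    ∃ x' ∈ D, dist x x' < r ∧ M⁻¹ * r < Metric.infDist x' Λ

/-- `Λ` is Ahlfors `d`-regular with constant `M` at scales below `r₀`. -/
def AhlforsRegular (n : ℕ) (d M r₀ : ℝ) (Λ : Set (EuclideanSpace ℝ (Fin n))) : Prop :=
  ∀ x ∈ Λ, ∀ r : ℝ, 0 < r → r < r₀ →
    ENNReal.ofReal (M⁻¹ * r ^ d) ≤ μH[d] (Metric.ball x r ∩ Λ) ∧
    μH[d] (Metric.ball x r ∩ Λ) ≤ ENNReal.ofReal (M * r ^ d)

lemma card_mul_le_aux (n : ℕ) (hn : 0 < n) (x : EuclideanSpace ℝ (Fin n))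
    (u : Finset (EuclideanSpace ℝ (Fin n))) (a R : ℝ) (ha : 0 < a) (hR : 0 ≤ R)
    (hc : ∀ c ∈ u, c ∈ Metric.closedBall x R)
    (hd : (↑u : Set (EuclideanSpace ℝ (Fin n))).PairwiseDisjoint
      (fun c => Metric.closedBall c a)) :
    (u.card : ℝ) * a ^ n ≤ (R + a) ^ n := by
  haveI : Nonempty (Fin n) := Fin.pos_iff_nonempty.mp hn
  haveI : Nontrivial (EuclideanSpace ℝ (Fin n)) := by
    refine ⟨EuclideanSpace.single ⟨0, hn⟩ (1:ℝ), 0, ?_⟩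
    intro h
    have := congrArg (fun w : EuclideanSpace ℝ (Fin n) => w ⟨0, hn⟩) h
    simp [EuclideanSpace.single] at this
  set v : ℝ≥0∞ := volume (Metric.ball (0 : EuclideanSpace ℝ (Fin n)) 1) with hv
  have hv0 : v ≠ 0 := (measure_ball_pos volume 0 one_pos).ne'
  have hvt : v ≠ ⊤ := measure_ball_lt_top.ne
  have hRa : 0 < R + a := by linarith
  have hball : ∀ c : EuclideanSpace ℝ (Fin n),
      volume (Metric.ball c a) = ENNReal.ofReal (a ^ n) * v := by
    intro c
    rw [Measure.addHaar_ball _ _ ha.le, finrank_euclideanSpace_fin]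
  have hdisj : (↑u : Set (EuclideanSpace ℝ (Fin n))).PairwiseDisjoint
      (fun c => Metric.ball c a) :=
    hd.mono fun c => Metric.ball_subset_closedBall
  have hmeas : volume (⋃ c ∈ u, Metric.ball c a) = ∑ c ∈ u, volume (Metric.ball c a) :=
    measure_biUnion_finset hdisj fun c _ => measurableSet_ball
  have hsub : (⋃ c ∈ u, Metric.ball c a) ⊆ Metric.ball x (R + a) := by
    intro y hy
    simp only [mem_iUnion] at hy
    obtain ⟨c, hcu, hyc⟩ := hy
    have h1 : dist y c < a := mem_ball.1 hyc
    have h2 : dist c x ≤ R := mem_closedBall.1 (hc c hcu)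
    have := dist_triangle y c x
    exact mem_ball.2 (by linarith)
  have key : ((u.card : ℝ≥0∞) * ENNReal.ofReal (a ^ n)) * v ≤ ENNReal.ofReal ((R + a) ^ n) * v := by
    calc ((u.card : ℝ≥0∞) * ENNReal.ofReal (a ^ n)) * v
        = ∑ _c ∈ u, ENNReal.ofReal (a ^ n) * v := by
          rw [Finset.sum_const, nsmul_eq_mul, mul_assoc]
      _ = ∑ c ∈ u, volume (Metric.ball c a) := by
          refine Finset.sum_congr rfl fun c _ => (hball c).symm
      _ = volume (⋃ c ∈ u, Metric.ball c a) := hmeas.symm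
      _ ≤ volume (Metric.ball x (R + a)) := measure_mono hsub
      _ = ENNReal.ofReal ((R + a) ^ n) * v := by
          rw [Measure.addHaar_ball _ _ hRa.le, finrank_euclideanSpace_fin]
  have key2 : (u.card : ℝ≥0∞) * ENNReal.ofReal (a ^ n) ≤ ENNReal.ofReal ((R + a) ^ n) :=
    (ENNReal.mul_le_mul_iff_left hv0 hvt).mp key
  rw [← ENNReal.ofReal_natCast, ← ENNReal.ofReal_mul (by positivity)] at key2
  exact (ENNReal.ofReal_le_ofReal_iff (by positivity)).mp key2

lemma hausdorff_ball_le (m : ℕ) (s : ℝ) (hs : 0 ≤ s) :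
    μH[(m:ℝ)] (Metric.ball (0 : EuclideanSpace ℝ (Fin m)) s)
      ≤ ENNReal.ofReal ((Real.sqrt m * (2*s)) ^ m) := by
  set h : (Fin m → ℝ) → EuclideanSpace ℝ (Fin m) := fun g => (WithLp.equiv 2 (∀ _ : Fin m, ℝ)).symm g with hh
  have hK : LipschitzWith ((m : ℝ≥0) ^ ((1:ℝ)/2)) h := by
    have := PiLp.antilipschitzWith_ofLp 2 (fun _ : Fin m => ℝ)
    have h2 : ((1 : ℝ≥0∞)/2).toReal = (1:ℝ)/2 := by norm_num
    have := this.to_rightInverse (WithLp.equiv 2 (∀ _ : Fin m, ℝ)).right_inv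
    rw [hh]
    simpa [Fintype.card_fin, h2] using this
  have hsub : Metric.ball (0 : EuclideanSpace ℝ (Fin m)) s
      ⊆ h '' (Metric.closedBall (0 : Fin m → ℝ) s) := by
    intro y hy
    refine ⟨WithLp.equiv 2 (Fin m → ℝ) y, ?_, rfl⟩
    have := (PiLp.lipschitzWith_ofLp 2 (fun _ : Fin m => ℝ)).dist_le_mul y 0
    simp only [NNReal.coe_one, one_mul] at this
    have hy' : dist y 0 < s := mem_ball.1 hy
    have : dist (WithLp.equiv 2 (Fin m → ℝ) y) (WithLp.equiv 2 (Fin m → ℝ) 0) ≤ dist y 0 := this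
    simp only [mem_closedBall]
    calc dist (WithLp.equiv 2 (Fin m → ℝ) y) 0
        = dist (WithLp.equiv 2 (Fin m → ℝ) y) (WithLp.equiv 2 (Fin m → ℝ) 0) := by norm_num
      _ ≤ dist y 0 := this
      _ ≤ s := hy'.le
  calc μH[(m:ℝ)] (Metric.ball (0 : EuclideanSpace ℝ (Fin m)) s)
      ≤ μH[(m:ℝ)] (h '' (Metric.closedBall (0 : Fin m → ℝ) s)) := measure_mono hsub
    _ ≤ ((((m : ℝ≥0) ^ ((1:ℝ)/2) : ℝ≥0)) : ℝ≥0∞) ^ (m:ℝ) * μH[(m:ℝ)] (Metric.closedBall (0 : Fin m → ℝ) s) :=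
        hK.hausdorffMeasure_image_le (by positivity) _
    _ ≤ ENNReal.ofReal ((Real.sqrt m * (2*s)) ^ m) := by
        have hpi : (μH[(m:ℝ)] : Measure (Fin m → ℝ)) = volume := by
          simpa [Fintype.card_fin] using
            (hausdorffMeasure_pi_real (ι := Fin m))
        rw [hpi, Real.volume_pi_closedBall _ hs, Fintype.card_fin]
        have h1 : ((((m : ℝ≥0) ^ ((1:ℝ)/2) : ℝ≥0)) : ℝ≥0∞) ^ (m:ℝ)
            = ENNReal.ofReal ((Real.sqrt m) ^ m) := by
          rw [ENNReal.coe_rpow_of_nonneg _ (by norm_num : (0:ℝ) ≤ 1/2),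
            ← ENNReal.rpow_mul]
          rw [Real.sqrt_eq_rpow, ← Real.rpow_natCast ((m:ℝ) ^ ((1:ℝ)/2)) m,
            ← Real.rpow_mul (Nat.cast_nonneg m),
            ← ENNReal.ofReal_rpow_of_nonneg (Nat.cast_nonneg m) (by positivity),
            ENNReal.ofReal_natCast]
          norm_cast
        rw [h1, ← ENNReal.ofReal_mul (by positivity), ← mul_pow]

lemma surface_ball_bound (n : ℕ) (hn : 2 ≤ n) (M r₀ : ℝ) (Ω : Set (EuclideanSpace ℝ (Fin n)))
    (hL : IsLipschitzDomain n M r₀ Ω) {c : EuclideanSpace ℝ (Fin n)} (hc : c ∈ frontier Ω)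
    {s : ℝ} (hs : 0 < s) (hs' : s ≤ 100 * r₀ * Real.sqrt (1 + M ^ 2)) :
    μH[(n:ℝ)-1] (Metric.ball c s ∩ frontier Ω)
      ≤ ENNReal.ofReal (((1+M) * (Real.sqrt ((n:ℝ)-1) * (2*s))) ^ (n-1)) := by
  obtain ⟨hopen, hconn, hbdd, hM, hr₀, hgraph⟩ := hL
  obtain ⟨f, e, φ, he1, hfe, hφlip, hφ0, hcyl⟩ := hgraph c hc
  obtain ⟨hΩcyl, hfr⟩ := hcyl s hs hs'
  have hcast : ((n-1:ℕ):ℝ) = (n:ℝ)-1 := by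
    have : (1:ℕ) ≤ n := le_trans one_le_two hn
    push_cast [Nat.cast_sub this]
    ring
  -- the decomposition map
  set T : (EuclideanSpace ℝ (Fin (n-1)) × ℝ) →ₗ[ℝ] EuclideanSpace ℝ (Fin n) :=
    f.toLinearMap.comp (LinearMap.fst ℝ _ ℝ) + (LinearMap.snd ℝ _ ℝ).smulRight e with hT
  have hTapp : ∀ p : EuclideanSpace ℝ (Fin (n-1)) × ℝ, T p = f p.1 + p.2 • e := by
    intro p; simp [hT]
  have hTnorm : ∀ p : EuclideanSpace ℝ (Fin (n-1)) × ℝ, ‖T p‖^2 = ‖p.1‖^2 + p.2^2 := by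
    intro p
    rw [hTapp]
    rw [norm_add_sq_real, real_inner_smul_right, hfe, norm_smul, f.norm_map, he1]
    simp [Real.norm_eq_abs, sq_abs]
  have hTinj : Function.Injective T := by
    rw [← LinearMap.ker_eq_bot, LinearMap.ker_eq_bot']
    intro p hp
    have h0 := hTnorm p
    rw [hp] at h0
    simp only [norm_zero] at h0
    have h1 : ‖p.1‖^2 = 0 := by linarith [sq_nonneg p.2, sq_nonneg ‖p.1‖]
    have h2 : p.2^2 = 0 := by linarith [sq_nonneg p.2, sq_nonneg ‖p.1‖]
    have h1' : p.1 = 0 := norm_eq_zero.mp (pow_eq_zero_iff two_ne_zero |>.mp h1)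
    have h2' : p.2 = 0 := pow_eq_zero_iff two_ne_zero |>.mp h2
    exact Prod.ext h1' h2'
  have hTsurj : Function.Surjective T := by
    rw [← LinearMap.injective_iff_surjective_of_finrank_eq_finrank (by
      rw [Module.finrank_prod, finrank_euclideanSpace_fin, finrank_euclideanSpace_fin,
        Module.finrank_self]
      omega)]
    exact hTinj
  -- ball ⊆ cylinder
  have hball : Metric.ball c s
      ⊆ {y | ∃ v t, ‖v‖ < s ∧ |t| < (1 + M) * s ∧ y = c + f v + t • e} := by
    intro y hy
    obtain ⟨p, hp⟩ := hTsurj (y - c)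
    have hd : ‖y - c‖ < s := by rwa [← dist_eq_norm, dist_comm y c, ← mem_ball']
    have hnorm := hTnorm p
    rw [hp] at hnorm
    have hle : ‖p.1‖ ≤ ‖y - c‖ := by
      have h1 : ‖p.1‖^2 ≤ ‖y - c‖^2 := by linarith [sq_nonneg p.2]
      have h2 := Real.sqrt_le_sqrt h1
      rwa [Real.sqrt_sq (norm_nonneg _), Real.sqrt_sq (norm_nonneg _)] at h2
    have hle2 : |p.2| ≤ ‖y - c‖ := by
      have h1 : p.2^2 ≤ ‖y - c‖^2 := by linarith [sq_nonneg ‖p.1‖]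
      have h2 := Real.sqrt_le_sqrt h1
      rwa [Real.sqrt_sq_eq_abs, Real.sqrt_sq (norm_nonneg _)] at h2
    have hv : ‖p.1‖ < s := lt_of_le_of_lt hle hd
    have ht : |p.2| < (1 + M) * s := by
      have hMs : s ≤ (1+M) * s := by nlinarith
      linarith [lt_of_le_of_lt hle2 hd]
    refine ⟨p.1, p.2, hv, ht, ?_⟩
    have h3 := hTapp p
    rw [hp] at h3
    rw [add_assoc, ← h3]
    abel
  -- graph map
  set g : EuclideanSpace ℝ (Fin (n-1)) → EuclideanSpace ℝ (Fin n) :=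
    fun v => c + f v + φ v • e with hg
  have hgl : LipschitzWith (Real.toNNReal (1+M)) g := by
    apply LipschitzWith.of_dist_le_mul
    intro v w
    have hφd : dist (φ v) (φ w) ≤ M * dist v w := by
      have := hφlip.dist_le_mul v w
      rwa [Real.coe_toNNReal _ hM.le] at this
    have : g v - g w = f (v - w) + (φ v - φ w) • e := by
      simp only [hg, map_sub, sub_smul]
      abel
    rw [dist_eq_norm, this, Real.coe_toNNReal _ (by linarith : (0:ℝ) ≤ 1 + M)]
    calc ‖f (v - w) + (φ v - φ w) • e‖ ≤ ‖f (v - w)‖ + ‖(φ v - φ w) • e‖ := norm_add_le _ _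
      _ = ‖v - w‖ + |φ v - φ w| := by rw [f.norm_map, norm_smul, he1, mul_one, Real.norm_eq_abs]
      _ ≤ ‖v - w‖ + M * ‖v - w‖ := by
          have h4 : |φ v - φ w| ≤ M * ‖v - w‖ := by
            have h5 := hφd
            rwa [Real.dist_eq, dist_eq_norm] at h5
          linarith
      _ = (1 + M) * ‖v - w‖ := by ring
      _ = (1 + M) * dist v w := by rw [dist_eq_norm]
  -- ball ∩ frontier ⊆ image of graph map
  have himg : Metric.ball c s ∩ frontier Ω ⊆ g '' (Metric.ball 0 s) := by
    rintro y ⟨hy1, hy2⟩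
    have : y ∈ frontier Ω ∩ {y | ∃ v t, ‖v‖ < s ∧ |t| < (1 + M) * s ∧ y = c + f v + t • e} :=
      ⟨hy2, hball hy1⟩
    rw [hfr] at this
    obtain ⟨v, t, hv, ht, hφt, hy⟩ := this
    refine ⟨v, by simpa using hv, ?_⟩
    rw [hg]
    simp only
    rw [hφt, ← hy]
  -- conclude
  calc μH[(n:ℝ)-1] (Metric.ball c s ∩ frontier Ω)
      ≤ μH[(n:ℝ)-1] (g '' (Metric.ball 0 s)) := measure_mono himg
    _ ≤ ((Real.toNNReal (1+M) : ℝ≥0∞)) ^ ((n:ℝ)-1) * μH[(n:ℝ)-1] (Metric.ball (0 : EuclideanSpace ℝ (Fin (n-1))) s) :=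
        hgl.hausdorffMeasure_image_le (by
          have h6 : (2:ℝ) ≤ (n:ℝ) := by exact_mod_cast hn
          linarith) _
    _ ≤ ENNReal.ofReal (((1+M) * (Real.sqrt ((n:ℝ)-1) * (2*s))) ^ (n-1)) := by
        have h2 := hausdorff_ball_le (n-1) s hs.le
        rw [hcast] at h2
        calc ((Real.toNNReal (1+M) : ℝ≥0∞)) ^ ((n:ℝ)-1) * μH[(n:ℝ)-1] (Metric.ball (0 : EuclideanSpace ℝ (Fin (n-1))) s)
            ≤ ((Real.toNNReal (1+M) : ℝ≥0∞)) ^ ((n:ℝ)-1)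
              * ENNReal.ofReal ((Real.sqrt ((n:ℝ)-1) * (2*s)) ^ (n-1)) := by
              gcongr
          _ = ENNReal.ofReal (((1+M)) ^ ((n:ℝ)-1))
              * ENNReal.ofReal ((Real.sqrt ((n:ℝ)-1) * (2*s)) ^ (n-1)) := by
              have hco : ((Real.toNNReal (1+M) : ℝ≥0∞)) = ENNReal.ofReal (1+M) := rfl
              rw [hco, ENNReal.ofReal_rpow_of_nonneg (by linarith) (by
                rw [← hcast]; positivity)]
          _ = ENNReal.ofReal (((1+M)) ^ ((n:ℝ)-1) * (Real.sqrt ((n:ℝ)-1) * (2*s)) ^ (n-1)) := by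
              rw [← ENNReal.ofReal_mul (by positivity)]
          _ = ENNReal.ofReal (((1+M) * (Real.sqrt ((n:ℝ)-1) * (2*s))) ^ (n-1)) := by
              congr 1
              rw [← hcast, Real.rpow_natCast, ← mul_pow]

/-- Lemma 2.2: measure of the `t`-collar of `Λ` inside a surface ball. -/
theorem statement2 (n : ℕ) (hn : 2 ≤ n) (M ε : ℝ) (hε : 0 ≤ ε) :
    ∃ C > 0, ∀ (r₀ : ℝ) (Ω D Λ : Set (EuclideanSpace ℝ (Fin n))),
      IsLipschitzDomain n M r₀ Ω →
      (∃ U, IsOpen U ∧ D = U ∩ frontier Ω) →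
      Λ = closure D ∩ (frontier Ω \ D) →
      AhlforsRegular n ((n : ℝ) - 2 + ε) M r₀ Λ →
      ∀ x ∈ Λ, ∀ r t : ℝ, 0 < r → r < r₀ → 0 < t → t < 2 * r →
        μH[(n : ℝ) - 1] (Metric.ball x r ∩ frontier Ω ∩ {y | Metric.infDist y Λ < t})
          ≤ ENNReal.ofReal (C * t ^ (1 - ε) * r ^ ((n : ℝ) - 2 + ε)) := by
  have hn2 : (2:ℝ) ≤ (n:ℝ) := by exact_mod_cast hn
  have hn0 : 0 < n := by omega
  set d : ℝ := (n:ℝ) - 2 + ε with hdd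
  have hd0 : 0 ≤ d := by rw [hdd]; linarith
  set K1 : ℝ := ((1+M) * (Real.sqrt ((n:ℝ)-1) * 10)) ^ (n-1) with hK1
  set C0 : ℝ := (30:ℝ)^n * M^2 * (2:ℝ)^d * K1 with hC0
  refine ⟨max C0 1, lt_of_lt_of_le one_pos (le_max_right _ _), ?_⟩
  intro r₀ Ω D Λ hLip hD hΛ hAhl x hx r t hr hrr₀ ht htr
  obtain ⟨U, hU, hDdef⟩ := hD
  have hM : 0 < M := hLip.2.2.2.1
  have hr₀pos : 0 < r₀ := hLip.2.2.2.2.1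
  have hΛfr : Λ ⊆ frontier Ω := by rw [hΛ]; intro y hy; exact hy.2.1
  have hΛclosed : IsClosed Λ := by
    rw [hΛ]
    refine isClosed_closure.inter ?_
    have h1 : frontier Ω \ D = frontier Ω ∩ Uᶜ := by
      rw [hDdef]; ext y; simp only [mem_diff, mem_inter_iff, mem_compl_iff]; tauto
    rw [h1]
    exact isClosed_frontier.inter hU.isClosed_compl
  have hsqrt1 : 1 ≤ Real.sqrt (1 + M^2) := by
    have h := Real.sqrt_le_sqrt (by nlinarith : (1:ℝ) ≤ 1 + M^2)
    rwa [Real.sqrt_one] at h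
  -- first covering: collar
  have hK : IsCompact (Λ ∩ Metric.closedBall x (3*r)) :=
    (isCompact_closedBall x (3*r)).inter_left hΛclosed
  obtain ⟨F, hFsub, hFfin, hFcover⟩ := hK.finite_cover_balls ht
  obtain ⟨u, huF, hudisj, hucover⟩ :=
    Vitali.exists_disjoint_subfamily_covering_enlargement_closedBall F id (fun _ => t) t
      (fun _ _ => le_rfl) 4 (by norm_num)
  have hufin : u.Finite := hFfin.subset huF
  set uF : Finset (EuclideanSpace ℝ (Fin n)) := hufin.toFinset with huuF
  have hmemu : ∀ b, b ∈ uF ↔ b ∈ u := fun b => hufin.mem_toFinset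
  have huΛ : ∀ b ∈ uF, b ∈ Λ := fun b hb => (hFsub (huF ((hmemu b).mp hb))).1
  have hu3r : ∀ b ∈ uF, b ∈ Metric.closedBall x (3*r) :=
    fun b hb => (hFsub (huF ((hmemu b).mp hb))).2
  -- collar covered by 5t-balls
  have hcollar : Metric.ball x r ∩ frontier Ω ∩ {y | Metric.infDist y Λ < t}
      ⊆ ⋃ b ∈ uF, Metric.ball b (5*t) ∩ frontier Ω := by
    rintro y ⟨⟨hy1, hy2⟩, hy3⟩
    obtain ⟨z, hzΛ, hzd⟩ := (Metric.infDist_lt_iff ⟨x, hx⟩).mp hy3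
    have hzK : z ∈ Λ ∩ Metric.closedBall x (3*r) := by
      refine ⟨hzΛ, mem_closedBall.mpr ?_⟩
      have h1 : dist y x < r := mem_ball.mp hy1
      have h2 := dist_triangle z y x
      rw [dist_comm z y] at h2
      linarith
    have := hFcover hzK
    simp only [mem_iUnion] at this
    obtain ⟨c, hcF, hzc⟩ := this
    obtain ⟨b, hbu, hbsub⟩ := hucover c hcF
    have hzb : dist z b ≤ 4 * t := by
      have : z ∈ Metric.closedBall (id c) t := mem_closedBall.mpr (mem_ball.mp hzc).le
      exact mem_closedBall.mp (hbsub this)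
    have hyb : dist y b < 5 * t := by
      have := dist_triangle y z b
      linarith
    simp only [mem_iUnion]
    exact ⟨b, (hmemu b).mpr hbu, mem_ball.mpr hyb, hy2⟩
  -- counting the balls: lower bound on mass
  have hdisj' : (↑uF : Set (EuclideanSpace ℝ (Fin n))).PairwiseDisjoint
      (fun b => Metric.ball b (t/2) ∩ Λ) := by
    have hcoe : (↑uF : Set (EuclideanSpace ℝ (Fin n))) = u := hufin.coe_toFinset
    rw [hcoe]
    refine hudisj.mono ?_
    intro b
    refine subset_trans inter_subset_left ?_
    refine subset_trans (Metric.ball_subset_ball (by linarith)) Metric.ball_subset_closedBall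
  have hsum_eq : μH[d] (⋃ b ∈ uF, Metric.ball b (t/2) ∩ Λ)
      = ∑ b ∈ uF, μH[d] (Metric.ball b (t/2) ∩ Λ) :=
    measure_biUnion_finset hdisj'
      (fun b _ => measurableSet_ball.inter hΛclosed.measurableSet)
  have hlow : ∀ b ∈ uF, ENNReal.ofReal (M⁻¹ * (t/2)^d) ≤ μH[d] (Metric.ball b (t/2) ∩ Λ) :=
    fun b hb => (hAhl b (huΛ b hb) (t/2) (by linarith) (by linarith)).1
  have hsub4 : (⋃ b ∈ uF, Metric.ball b (t/2) ∩ Λ) ⊆ Metric.ball x (4*r) ∩ Λ := by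
    intro w hw
    simp only [mem_iUnion] at hw
    obtain ⟨b, hb, hw1, hw2⟩ := hw
    refine ⟨mem_ball.mpr ?_, hw2⟩
    have h1 : dist w b < t/2 := mem_ball.mp hw1
    have h2 : dist b x ≤ 3*r := mem_closedBall.mp (hu3r b hb)
    have := dist_triangle w b x
    linarith
  -- second covering: the big ball by r-balls
  have hK2 : IsCompact (Λ ∩ Metric.closedBall x (4*r)) :=
    (isCompact_closedBall x (4*r)).inter_left hΛclosed
  obtain ⟨F₂, hF₂sub, hF₂fin, hF₂cover⟩ := hK2.finite_cover_balls (by linarith : 0 < r/6)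
  obtain ⟨u₂, hu₂F, hu₂disj, hu₂cover⟩ :=
    Vitali.exists_disjoint_subfamily_covering_enlargement_closedBall F₂ id (fun _ => r/6) (r/6)
      (fun _ _ => le_rfl) 4 (by norm_num)
  have hu₂fin : u₂.Finite := hF₂fin.subset hu₂F
  set uF₂ : Finset (EuclideanSpace ℝ (Fin n)) := hu₂fin.toFinset with huuF₂
  have hmemu₂ : ∀ b, b ∈ uF₂ ↔ b ∈ u₂ := fun b => hu₂fin.mem_toFinset
  have hu₂Λ : ∀ b ∈ uF₂, b ∈ Λ := fun b hb => (hF₂sub (hu₂F ((hmemu₂ b).mp hb))).1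
  have hu₂4r : ∀ b ∈ uF₂, b ∈ Metric.closedBall x (4*r) :=
    fun b hb => (hF₂sub (hu₂F ((hmemu₂ b).mp hb))).2
  have hcover2 : Metric.ball x (4*r) ∩ Λ ⊆ ⋃ b ∈ uF₂, Metric.ball b r ∩ Λ := by
    rintro y ⟨hy1, hy2⟩
    have hyK2 : y ∈ Λ ∩ Metric.closedBall x (4*r) :=
      ⟨hy2, Metric.ball_subset_closedBall hy1⟩
    have := hF₂cover hyK2
    simp only [mem_iUnion] at this
    obtain ⟨c, hcF, hyc⟩ := this
    obtain ⟨b, hbu, hbsub⟩ := hu₂cover c hcF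
    have hyb : dist y b ≤ 4 * (r/6) := by
      have : y ∈ Metric.closedBall (id c) (r/6) := mem_closedBall.mpr (mem_ball.mp hyc).le
      exact mem_closedBall.mp (hbsub this)
    simp only [mem_iUnion]
    exact ⟨b, (hmemu₂ b).mpr hbu, mem_ball.mpr (by linarith), hy2⟩
  -- counting uF₂ by volume
  have hdisj₂ : (↑uF₂ : Set (EuclideanSpace ℝ (Fin n))).PairwiseDisjoint
      (fun c => Metric.closedBall c (r/6)) := by
    have hcoe : (↑uF₂ : Set (EuclideanSpace ℝ (Fin n))) = u₂ := hu₂fin.coe_toFinset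
    rw [hcoe]
    exact hu₂disj
  have hcard₂ : (uF₂.card : ℝ) ≤ 30^n := by
    have h1 := card_mul_le_aux n hn0 x uF₂ (r/6) (4*r) (by linarith) (by linarith)
      (fun c hc => hu₂4r c hc) hdisj₂
    have h2 : (4*r + r/6)^n ≤ (5*r)^n := by
      apply pow_le_pow_left₀ (by linarith) (by linarith)
    have h3 : (5*r)^n = 30^n * (r/6)^n := by
      rw [← mul_pow]; congr 1; ring
    have hpos : 0 < (r/6)^n := by positivity
    have h4 : (uF₂.card : ℝ) * (r/6)^n ≤ 30^n * (r/6)^n := by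
      calc (uF₂.card : ℝ) * (r/6)^n ≤ (4*r + r/6)^n := h1
        _ ≤ (5*r)^n := h2
        _ = 30^n * (r/6)^n := h3
    exact le_of_mul_le_mul_right h4 hpos
  -- upper bound on mass of big ball
  have hbig : μH[d] (Metric.ball x (4*r) ∩ Λ) ≤ ENNReal.ofReal ((30:ℝ)^n * (M * r^d)) := by
    calc μH[d] (Metric.ball x (4*r) ∩ Λ)
        ≤ μH[d] (⋃ b ∈ uF₂, Metric.ball b r ∩ Λ) := measure_mono hcover2
      _ ≤ ∑ b ∈ uF₂, μH[d] (Metric.ball b r ∩ Λ) := measure_biUnion_finset_le _ _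
      _ ≤ ∑ _b ∈ uF₂, ENNReal.ofReal (M * r^d) := by
          refine Finset.sum_le_sum ?_
          intro b hb
          exact (hAhl b (hu₂Λ b hb) r hr hrr₀).2
      _ = (uF₂.card : ℝ≥0∞) * ENNReal.ofReal (M * r^d) := by
          rw [Finset.sum_const, nsmul_eq_mul]
      _ = ENNReal.ofReal ((uF₂.card : ℝ) * (M * r^d)) := by
          rw [← ENNReal.ofReal_natCast uF₂.card, ← ENNReal.ofReal_mul (by positivity)]
      _ ≤ ENNReal.ofReal ((30:ℝ)^n * (M * r^d)) := by
          apply ENNReal.ofReal_le_ofReal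
          have hMr : 0 ≤ M * r^d := by positivity
          exact mul_le_mul_of_nonneg_right hcard₂ hMr
  -- cardinality bound for uF
  have hcardu : (uF.card : ℝ) * (M⁻¹ * (t/2)^d) ≤ (30:ℝ)^n * (M * r^d) := by
    have h1 : (uF.card : ℝ≥0∞) * ENNReal.ofReal (M⁻¹ * (t/2)^d)
        ≤ ENNReal.ofReal ((30:ℝ)^n * (M * r^d)) := by
      calc (uF.card : ℝ≥0∞) * ENNReal.ofReal (M⁻¹ * (t/2)^d)
          = uF.card • ENNReal.ofReal (M⁻¹ * (t/2)^d) := by rw [nsmul_eq_mul]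
        _ ≤ ∑ b ∈ uF, μH[d] (Metric.ball b (t/2) ∩ Λ) :=
            Finset.card_nsmul_le_sum uF _ _ hlow
        _ = μH[d] (⋃ b ∈ uF, Metric.ball b (t/2) ∩ Λ) := hsum_eq.symm
        _ ≤ μH[d] (Metric.ball x (4*r) ∩ Λ) := measure_mono hsub4
        _ ≤ ENNReal.ofReal ((30:ℝ)^n * (M * r^d)) := hbig
    rw [← ENNReal.ofReal_natCast uF.card, ← ENNReal.ofReal_mul (by positivity)] at h1
    exact (ENNReal.ofReal_le_ofReal_iff (by positivity)).mp h1
  -- surface measure of each 5t-ball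
  have hsurf : ∀ b ∈ uF, μH[(n:ℝ)-1] (Metric.ball b (5*t) ∩ frontier Ω)
      ≤ ENNReal.ofReal (((1+M) * (Real.sqrt ((n:ℝ)-1) * (2*(5*t)))) ^ (n-1)) := by
    intro b hb
    refine surface_ball_bound n hn M r₀ Ω hLip (hΛfr (huΛ b hb)) (by linarith) ?_
    have h5 : 5*t < 10*r₀ := by linarith
    nlinarith [hr₀pos, hsqrt1]
  -- assemble
  set β : ℝ := ((1+M) * (Real.sqrt ((n:ℝ)-1) * (2*(5*t)))) ^ (n-1) with hβdef
  have hmain : μH[(n:ℝ)-1] (Metric.ball x r ∩ frontier Ω ∩ {y | Metric.infDist y Λ < t})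
      ≤ ENNReal.ofReal ((uF.card : ℝ) * β) := by
    calc μH[(n:ℝ)-1] (Metric.ball x r ∩ frontier Ω ∩ {y | Metric.infDist y Λ < t})
        ≤ μH[(n:ℝ)-1] (⋃ b ∈ uF, Metric.ball b (5*t) ∩ frontier Ω) := measure_mono hcollar
      _ ≤ ∑ b ∈ uF, μH[(n:ℝ)-1] (Metric.ball b (5*t) ∩ frontier Ω) :=
          measure_biUnion_finset_le _ _
      _ ≤ ∑ _b ∈ uF, ENNReal.ofReal β := Finset.sum_le_sum hsurf
      _ = (uF.card : ℝ≥0∞) * ENNReal.ofReal β := by rw [Finset.sum_const, nsmul_eq_mul]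
      _ = ENNReal.ofReal ((uF.card : ℝ) * β) := by
          rw [← ENNReal.ofReal_natCast uF.card, ← ENNReal.ofReal_mul (by positivity)]
  refine le_trans hmain (ENNReal.ofReal_le_ofReal ?_)
  -- final real arithmetic
  have hcast' : ((n-1:ℕ):ℝ) = (n:ℝ)-1 := by
    have h1 : (1:ℕ) ≤ n := by omega
    push_cast [Nat.cast_sub h1]
    ring
  have hq0 : 0 < (t/2)^d := Real.rpow_pos_of_pos (by linarith) d
  have htd0 : 0 < t^d := Real.rpow_pos_of_pos ht d
  have hrd0 : 0 < r^d := Real.rpow_pos_of_pos hr d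
  have hte0 : 0 < t^(1-ε) := Real.rpow_pos_of_pos ht _
  have hK1nn : 0 ≤ K1 := by
    rw [hK1]
    have : 0 ≤ (1+M) * (Real.sqrt ((n:ℝ)-1) * 10) := by positivity
    positivity
  -- β = K1 * t^{1-ε} * t^d
  have hβ : β = K1 * (t^(1-ε) * t^d) := by
    have h1 : β = K1 * t^(n-1:ℕ) := by
      rw [hβdef, hK1, ← mul_pow]
      congr 1
      ring
    rw [h1]
    congr 1
    rw [← Real.rpow_natCast t (n-1), hcast', ← Real.rpow_add ht]
    congr 1
    rw [hdd]; ring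
  -- card bound in usable form
  have hA : (uF.card : ℝ) ≤ ((30:ℝ)^n * (M * r^d)) * M / ((t/2)^d) := by
    rw [le_div_iff₀ hq0]
    calc (uF.card : ℝ) * (t/2)^d
        = ((uF.card : ℝ) * (M⁻¹ * (t/2)^d)) * M := by field_simp
      _ ≤ ((30:ℝ)^n * (M * r^d)) * M := mul_le_mul_of_nonneg_right hcardu hM.le
  have hq : (t/2)^d = t^d / (2:ℝ)^d := Real.div_rpow ht.le (by norm_num) d
  calc (uF.card : ℝ) * β
      ≤ (((30:ℝ)^n * (M * r^d)) * M / ((t/2)^d)) * β :=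
        mul_le_mul_of_nonneg_right hA (by rw [hβ]; positivity)
    _ = C0 * t^(1-ε) * r^d := by
        rw [hβ, hq, hC0]
        have h2d : (0:ℝ) < (2:ℝ)^d := Real.rpow_pos_of_pos (by norm_num) d
        field_simp
    _ ≤ max C0 1 * t^(1-ε) * r^d := by
        have : 0 ≤ t^(1-ε) * r^d := by positivity
        calc C0 * t^(1-ε) * r^d = C0 * (t^(1-ε) * r^d) := by ring
          _ ≤ max C0 1 * (t^(1-ε) * r^d) := mul_le_mul_of_nonneg_right (le_max_left _ _) this
          _ = max C0 1 * t^(1-ε) * r^d := by ring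
end
end

section
/- Let Ω ⊆ ℝⁿ (n ≥ 2) be a bounded Lipschitz domain with constant M and scale r₀, let D be a relatively open subset of ∂Ω with relative boundary Λ, δ(y) = dist(y, Λ), and assume D satisfies the corkscrew condition. Then there is a constant c > 0, depending only on n and M, such that for every x ∈ D and every 0 < r < r₀ there exists a point x_D ∈ D with |x − x_D| ≤ r and Δ_{c·r}(x_D) ⊆ D. -/
open MeasureTheory Metric Set
open Filter Topology
open scoped RealInnerProductSpace ENNReal NNReal

noncomputable section

/-- Orthogonal decomposition along `range f ⊕ ℝ e`. -/
lemma decomp_aux {n : ℕ} (hn : 2 ≤ n)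
    (f : EuclideanSpace ℝ (Fin (n - 1)) →ₗᵢ[ℝ] EuclideanSpace ℝ (Fin n))
    (e : EuclideanSpace ℝ (Fin n)) (he : ‖e‖ = 1)
    (horth : ∀ v, ⟪f v, e⟫ = 0) (y : EuclideanSpace ℝ (Fin n)) :
    ∃ v t, ‖v‖ ≤ ‖y‖ ∧ |t| ≤ ‖y‖ ∧ y = f v + t • e := by
  have he0 : e ≠ 0 := by
    intro h; rw [h, norm_zero] at he; norm_num at he
  have hee : (⟪e, e⟫ : ℝ) = 1 := by
    rw [real_inner_self_eq_norm_sq, he]; norm_num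
  set K := LinearMap.range f.toLinearMap with hK
  have hKle : K ≤ (Submodule.span ℝ {e})ᗮ := by
    rintro _ ⟨v, rfl⟩
    rw [Submodule.mem_orthogonal_singleton_iff_inner_right]
    rw [real_inner_comm]
    exact horth v
  have h1 : Module.finrank ℝ K = n - 1 := by
    rw [hK, LinearMap.finrank_range_of_inj f.injective, finrank_euclideanSpace_fin]
  have h2 : Module.finrank ℝ (Submodule.span ℝ {e})ᗮ = n - 1 := by
    have h3 := Submodule.finrank_add_finrank_orthogonal (𝕜 := ℝ) (Submodule.span ℝ {e})
    rw [finrank_span_singleton he0, finrank_euclideanSpace_fin] at h3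
    omega
  have hKeq : K = (Submodule.span ℝ {e})ᗮ :=
    Submodule.eq_of_le_of_finrank_le hKle (by rw [h1, h2])
  set t := (⟪y, e⟫ : ℝ) with ht
  have hmem : y - t • e ∈ (Submodule.span ℝ {e})ᗮ := by
    rw [Submodule.mem_orthogonal_singleton_iff_inner_right, inner_sub_right,
      real_inner_smul_right, hee, real_inner_comm]
    ring
  rw [← hKeq] at hmem
  obtain ⟨v, hv⟩ := hmem
  have hy : y = f v + t • e := by
    have : f v = y - t • e := hv
    rw [this]; abel
  have hpyth : ‖y‖ ^ 2 = ‖v‖ ^ 2 + t ^ 2 := by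
    have ho : (⟪f v, t • e⟫ : ℝ) = 0 := by
      rw [real_inner_smul_right, horth]; ring
    have hnorm : ‖t • e‖ = |t| := by
      rw [norm_smul, he, Real.norm_eq_abs, mul_one]
    rw [hy, norm_add_sq_real, ho, f.norm_map, hnorm, sq_abs]
    ring
  refine ⟨v, t, ?_, ?_, hy⟩
  · nlinarith [norm_nonneg v, norm_nonneg y, sq_nonneg t]
  · nlinarith [norm_nonneg y, abs_nonneg t, norm_nonneg v, sq_abs t]

set_option maxHeartbeats 400000 in
/-- Key geometric lemma: if `p ∈ D` and `q ∈ ∂Ω \ D` is at distance `< r₀` from `p`,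
then there is a point of `Λ` at distance at most `(1+M) dist p q` from `p`. -/
lemma exit_point {n : ℕ} (hn : 2 ≤ n) {M r₀ : ℝ}
    {Ω U D Λ : Set (EuclideanSpace ℝ (Fin n))}
    (hLip : IsLipschitzDomain n M r₀ Ω)
    (hU : IsOpen U) (hD : D = U ∩ frontier Ω)
    (hΛ : Λ = closure D ∩ (frontier Ω \ D))
    {p q : EuclideanSpace ℝ (Fin n)} (hp : p ∈ D) (hq : q ∈ frontier Ω) (hqD : q ∉ D)
    (hpq : dist p q < r₀) :
    ∃ z ∈ Λ, dist p z ≤ (1 + M) * dist p q := by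
  obtain ⟨-, -, -, hM, hr₀, hchart⟩ := hLip
  have hp' : p ∈ U ∩ frontier Ω := by rw [← hD]; exact hp
  have hpfr : p ∈ frontier Ω := hp'.2
  have hpU : p ∈ U := hp'.1
  obtain ⟨f, e, φ, he, horth, hφ, hφ0, hch⟩ := hchart p hpfr
  have hsqrt : (1 : ℝ) ≤ Real.sqrt (1 + M ^ 2) := Real.one_le_sqrt.2 (by nlinarith)
  have hs : r₀ ≤ 100 * r₀ * Real.sqrt (1 + M ^ 2) := by nlinarith
  obtain ⟨-, hFr⟩ := hch r₀ hr₀ hs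
  -- decompose q - p
  obtain ⟨v, t, hvle, htle, hdec⟩ := decomp_aux hn f e he horth (q - p)
  have hqp : ‖q - p‖ = dist p q := by rw [dist_comm, dist_eq_norm]
  rw [hqp] at hvle htle
  have hqrep : q = p + f v + t • e := by rw [add_assoc, ← hdec]; abel
  have hMnn : (0:ℝ) ≤ M := hM.le
  have hpqnn : (0:ℝ) ≤ dist p q := dist_nonneg
  -- q lies in the cylinder; conclude φ v = t
  have hqcyl : q ∈ frontier Ω ∩
      {y | ∃ v t, ‖v‖ < r₀ ∧ |t| < (1 + M) * r₀ ∧ y = p + f v + t • e} := by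
    refine ⟨hq, v, t, lt_of_le_of_lt hvle hpq, ?_, hqrep⟩
    calc |t| ≤ dist p q := htle
      _ < r₀ := hpq
      _ ≤ (1 + M) * r₀ := by nlinarith
  rw [hFr] at hqcyl
  obtain ⟨v', t', hv', ht', hφv', hq'⟩ := hqcyl
  -- uniqueness of the decomposition
  have huniq : v' = v ∧ t' = t := by
    have heq : f v' + t' • e = f v + t • e := by
      have := hqrep.symm.trans hq'
      have h2 : p + (f v + t • e) = p + (f v' + t' • e) := by
        rw [← add_assoc, ← add_assoc, ← this]
      exact (add_right_injective p h2).symm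
    have hee : (⟪e, e⟫ : ℝ) = 1 := by
      rw [real_inner_self_eq_norm_sq, he]; norm_num
    have htt : t' = t := by
      have h3 : (⟪f v' + t' • e, e⟫ : ℝ) = ⟪f v + t • e, e⟫ := by rw [heq]
      rw [inner_add_left, inner_add_left, horth, horth, real_inner_smul_left,
        real_inner_smul_left, hee] at h3
      simpa using h3
    have hvv : v' = v := by
      apply f.injective
      have : f v' + t' • e - t' • e = f v + t • e - t • e := by rw [heq, htt]
      simpa using this
    exact ⟨hvv, htt⟩
  have hφv : φ v = t := by rw [← huniq.1, ← huniq.2]; exact hφv'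
  -- the path along the graph
  set γ : ℝ → EuclideanSpace ℝ (Fin n) := fun u => p + f (u • v) + φ (u • v) • e with hγ
  have hφbound : ∀ w : EuclideanSpace ℝ (Fin (n - 1)), |φ w| ≤ M * ‖w‖ := by
    intro w
    have := hφ.dist_le_mul w 0
    rw [Real.dist_eq, hφ0, sub_zero, dist_zero_right, Real.coe_toNNReal M hMnn] at this
    exact this
  have hγfr : ∀ u ∈ Icc (0:ℝ) 1, γ u ∈ frontier Ω := by
    intro u hu
    have huv : ‖u • v‖ < r₀ := by
      rw [norm_smul, Real.norm_eq_abs]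
      have h1 : |u| ≤ 1 := abs_le.2 ⟨by linarith [hu.1], hu.2⟩
      calc |u| * ‖v‖ ≤ 1 * ‖v‖ := by
            exact mul_le_mul_of_nonneg_right h1 (norm_nonneg v)
        _ = ‖v‖ := one_mul _
        _ ≤ dist p q := hvle
        _ < r₀ := hpq
    have hφuv : |φ (u • v)| < (1 + M) * r₀ := by
      calc |φ (u • v)| ≤ M * ‖u • v‖ := hφbound _
        _ < M * r₀ + r₀ := by nlinarith [norm_nonneg (u • v)]
        _ = (1 + M) * r₀ := by ring
    have : γ u ∈ {y | ∃ v t, ‖v‖ < r₀ ∧ |t| < (1 + M) * r₀ ∧ φ v = t ∧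
        y = p + f v + t • e} := ⟨u • v, φ (u • v), huv, hφuv, rfl, rfl⟩
    rw [← hFr] at this
    exact this.1
  have hγcont : Continuous γ := by
    have h1 : Continuous fun u : ℝ => u • v := continuous_id.smul continuous_const
    have h2 : Continuous fun u : ℝ => f (u • v) := f.continuous.comp h1
    have h3 : Continuous fun u : ℝ => φ (u • v) := hφ.continuous.comp h1
    exact (continuous_const.add h2).add (h3.smul continuous_const)
  have hγ0 : γ 0 = p := by
    simp only [hγ, zero_smul, map_zero, hφ0, add_zero]
  have hγ1 : γ 1 = q := by
    simp only [hγ, one_smul, hφv]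
    exact hqrep.symm
  -- first exit time
  set S : Set ℝ := Icc (0:ℝ) 1 ∩ γ ⁻¹' Uᶜ with hS
  have hScl : IsClosed S := isClosed_Icc.inter (hU.isClosed_compl.preimage hγcont)
  have hqU : q ∉ U := fun h => hqD (by rw [hD]; exact ⟨h, hq⟩)
  have h1S : (1:ℝ) ∈ S := ⟨⟨zero_le_one, le_refl 1⟩, by simp [hγ1, hqU]⟩
  have hSne : S.Nonempty := ⟨1, h1S⟩
  have hSbdd : BddBelow S := ⟨0, fun u hu => hu.1.1⟩
  set u₀ := sInf S with hu₀
  have hu₀S : u₀ ∈ S := hScl.csInf_mem hSne hSbdd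
  have hu₀Icc : u₀ ∈ Icc (0:ℝ) 1 := hu₀S.1
  have hu₀pos : 0 < u₀ := by
    rcases lt_or_eq_of_le hu₀Icc.1 with h | h
    · exact h
    · exfalso
      have : γ u₀ ∈ U := by rw [← h, hγ0]; exact hpU
      exact hu₀S.2 this
  set z := γ u₀ with hz
  have hzfr : z ∈ frontier Ω := hγfr u₀ hu₀Icc
  have hzD : z ∉ D := by
    intro h
    rw [hD] at h
    exact hu₀S.2 h.1
  -- z ∈ closure D
  have hbefore : ∀ u ∈ Ico (0:ℝ) u₀, γ u ∈ D := by
    intro u hu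
    have huS : u ∉ S := fun h => absurd (csInf_le hSbdd h) (not_le.2 hu.2)
    have huIcc : u ∈ Icc (0:ℝ) 1 := ⟨hu.1, le_trans hu.2.le hu₀Icc.2⟩
    have hUmem : γ u ∈ U := by
      by_contra h
      exact huS ⟨huIcc, h⟩
    rw [hD]
    exact ⟨hUmem, hγfr u huIcc⟩
  have hclos : z ∈ closure D := by
    have hne : (𝓝[Ico (0:ℝ) u₀] u₀).NeBot := by
      rw [← mem_closure_iff_nhdsWithin_neBot, closure_Ico hu₀pos.ne]
      exact ⟨hu₀Icc.1, le_refl u₀⟩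
    have htd : Filter.Tendsto γ (𝓝[Ico (0:ℝ) u₀] u₀) (𝓝 z) :=
      (hγcont.tendsto u₀).mono_left nhdsWithin_le_nhds
    exact mem_closure_of_tendsto htd
      (eventually_mem_nhdsWithin.mono fun u hu => hbefore u hu)
  have hzΛ : z ∈ Λ := by rw [hΛ]; exact ⟨hclos, hzfr, hzD⟩
  refine ⟨z, hzΛ, ?_⟩
  have hdist : dist p z = ‖f (u₀ • v) + φ (u₀ • v) • e‖ := by
    rw [hz]
    show dist p (p + f (u₀ • v) + φ (u₀ • v) • e) = _
    rw [add_assoc]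
    exact dist_self_add_right (f (u₀ • v) + φ (u₀ • v) • e) p
  have hu₀v : ‖u₀ • v‖ ≤ ‖v‖ := by
    rw [norm_smul, Real.norm_eq_abs, abs_of_pos hu₀pos]
    calc u₀ * ‖v‖ ≤ 1 * ‖v‖ :=
        mul_le_mul_of_nonneg_right hu₀Icc.2 (norm_nonneg v)
      _ = ‖v‖ := one_mul _
  calc dist p z = ‖f (u₀ • v) + φ (u₀ • v) • e‖ := hdist
    _ ≤ ‖f (u₀ • v)‖ + ‖φ (u₀ • v) • e‖ := norm_add_le _ _
    _ = ‖u₀ • v‖ + |φ (u₀ • v)| := by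
        rw [f.norm_map, norm_smul (φ (u₀ • v)) e, he, Real.norm_eq_abs, mul_one]
    _ ≤ ‖v‖ + M * ‖v‖ := add_le_add hu₀v (le_trans (hφbound _)
        (mul_le_mul_of_nonneg_left hu₀v hMnn))
    _ = (1 + M) * ‖v‖ := by ring
    _ ≤ (1 + M) * dist p q := by nlinarith

/-- Lemma 2.3, first part: near every point of `D` there is a point
`x_D ∈ D` whose surface ball of comparable radius is contained in `D`. -/
theorem statement4 (n : ℕ) (hn : 2 ≤ n) (M : ℝ) :
    ∃ c > 0, ∀ (r₀ : ℝ) (Ω D Λ : Set (EuclideanSpace ℝ (Fin n))),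
      IsLipschitzDomain n M r₀ Ω →
      (∃ U, IsOpen U ∧ D = U ∩ frontier Ω) →
      Λ = closure D ∩ (frontier Ω \ D) →
      Corkscrew n M r₀ D Λ →
      ∀ x ∈ D, ∀ r : ℝ, 0 < r → r < r₀ →
        ∃ xD ∈ D, dist x xD ≤ r ∧ Metric.ball xD (c * r) ∩ frontier Ω ⊆ D := by
  refine ⟨(4 * (|M| + 1) ^ 2)⁻¹, by positivity, ?_⟩
  intro r₀ Ω D Λ hLip hDex hΛ hCork x hx r hr hrr₀
  obtain ⟨U, hU, hD⟩ := hDex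
  have hM : 0 < M := hLip.2.2.2.1
  have hr₀ : 0 < r₀ := hLip.2.2.2.2.1
  have habs : |M| = M := abs_of_pos hM
  set c : ℝ := (4 * (|M| + 1) ^ 2)⁻¹ with hc
  have hM1 : (0:ℝ) < M + 1 := by linarith
  have hcpos : 0 < c := by positivity
  have hcdef : c = (4 * (M + 1) ^ 2)⁻¹ := by rw [hc, habs]
  have hkey : (1 + M) * c = (4 * (M + 1))⁻¹ := by
    rw [hcdef]
    field_simp
    ring
  have hkey4 : (1 + M) * c ≤ 4⁻¹ := by
    rw [hkey]
    rw [inv_le_inv₀ (by linarith) (by norm_num)]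
    linarith
  have hcle : c ≤ 4⁻¹ := by
    have h1 : (1:ℝ) ≤ 1 + M := by linarith
    nlinarith [hcpos]
  have hcr : c * r ≤ r / 4 := by nlinarith
  by_cases hcase : ball x (c * r) ∩ frontier Ω ⊆ D
  · exact ⟨x, hx, by simp [hr.le], hcase⟩
  · rw [not_subset] at hcase
    obtain ⟨q, hq, hqD⟩ := hcase
    have hxq : dist x q < c * r := by
      have := hq.1
      rw [mem_ball] at this
      rw [dist_comm]
      exact this
    have hxqr₀ : dist x q < r₀ := by linarith
    obtain ⟨z, hz, hdz⟩ := exit_point hn hLip hU hD hΛ hx hq.2 hqD hxqr₀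
    have hdz2 : dist x z < r / 2 := by
      have h1 : (1 + M) * dist x q < (1 + M) * (c * r) := by
        apply mul_lt_mul_of_pos_left hxq (by linarith)
      have h2 : (1 + M) * (c * r) ≤ r / 4 := by
        calc (1 + M) * (c * r) = ((1 + M) * c) * r := by ring
          _ ≤ 4⁻¹ * r := mul_le_mul_of_nonneg_right hkey4 hr.le
          _ = r / 4 := by ring
      linarith
    obtain ⟨x', hx', hzx', hinf⟩ := hCork z hz (r / 2) (by linarith) (by linarith)
    refine ⟨x', hx', ?_, ?_⟩
    · calc dist x x' ≤ dist x z + dist z x' := dist_triangle x z x'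
        _ ≤ r := by linarith
    · intro q' hq'
      by_contra hq'D
      have hx'q : dist x' q' < c * r := by
        have := hq'.1
        rw [mem_ball] at this
        rw [dist_comm]
        exact this
      have hx'qr₀ : dist x' q' < r₀ := by linarith
      obtain ⟨z', hz', hdz'⟩ := exit_point hn hLip hU hD hΛ hx' hq'.2 hq'D hx'qr₀
      have h1 : infDist x' Λ ≤ dist x' z' := infDist_le_dist_of_mem hz'
      have h2 : dist x' z' < (1 + M) * (c * r) := by
        have := mul_lt_mul_of_pos_left hx'q (show (0:ℝ) < 1 + M by linarith)
        linarith
      have h3 : (1 + M) * (c * r) < M⁻¹ * (r / 2) := by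
        rw [show (1 + M) * (c * r) = ((1 + M) * c) * r by ring, hkey,
          inv_mul_eq_div, inv_mul_eq_div, div_lt_div_iff₀ (by linarith) hM]
        nlinarith
      linarith
end
end

section
/- Let Ω ⊆ ℝⁿ (n ≥ 2) be a bounded Lipschitz domain with constant M and scale r₀, let D be a relatively open subset of ∂Ω with relative boundary Λ, δ(y) = dist(y, Λ), and assume D satisfies the corkscrew condition. Then there is a constant c > 0, depending only on n and M, such that for every x ∈ D and every 0 < r < r₀, σ(Δ_r(x) ∩ D) ≥ c·r^{n−1}, where σ is (n−1)-dimensional Hausdorff measure restricted to ∂Ω. -/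
open MeasureTheory Metric Set
open scoped RealInnerProductSpace ENNReal NNReal

noncomputable section

lemma ball_hausdorff_lb (m : ℕ) (hm : 0 < m) (u : ℝ) (hu : 0 < u) :
    ENNReal.ofReal ((2 / Real.sqrt m) ^ m * u ^ m)
      ≤ μH[(m : ℝ)] (Metric.ball (0 : EuclideanSpace ℝ (Fin m)) u) := by
  have hm' : (0 : ℝ) < m := by exact_mod_cast hm
  have hsm : 0 < Real.sqrt m := Real.sqrt_pos.2 hm'
  set s := u / Real.sqrt m with hs
  have hs0 : 0 < s := div_pos hu hsm
  set e := WithLp.equiv 2 (Fin m → ℝ) with he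
  set A : Set (EuclideanSpace ℝ (Fin m)) := ⇑e ⁻¹' Metric.ball 0 s with hA
  have hsub : A ⊆ Metric.ball 0 u := by
    intro y hy
    have hy' : ‖e y‖ < s := by
      have : e y ∈ Metric.ball (0 : Fin m → ℝ) s := hy
      simpa [mem_ball_zero_iff] using this
    have h1 : ∀ i, ‖y i‖ < s := by
      intro i
      have := (pi_norm_lt_iff hs0).1 hy' i
      exact this
    rw [mem_ball_zero_iff, EuclideanSpace.norm_eq]
    have h2 : ∑ i, ‖y i‖ ^ 2 < ∑ _i : Fin m, s ^ 2 := by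
      apply Finset.sum_lt_sum_of_nonempty
      · exact Finset.univ_nonempty_iff.2 ⟨⟨0, hm⟩⟩
      · intro i _
        exact pow_lt_pow_left₀ (h1 i) (norm_nonneg _) (by norm_num)
    have h3 : (∑ _i : Fin m, s ^ 2) = u ^ 2 := by
      rw [Finset.sum_const, Finset.card_univ, Fintype.card_fin, nsmul_eq_mul, hs,
        div_pow, Real.sq_sqrt hm'.le]
      field_simp
    calc Real.sqrt (∑ i, ‖y i‖ ^ 2) < Real.sqrt (u ^ 2) := by
          apply Real.sqrt_lt_sqrt (by positivity); rw [← h3]; exact h2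
      _ = u := Real.sqrt_sq hu.le
  have himg : ⇑e '' A = Metric.ball 0 s := Set.image_preimage_eq _ e.surjective
  have hlip : LipschitzWith 1 ⇑e := PiLp.lipschitzWith_ofLp 2 _
  have h2 : μH[(m:ℝ)] (Metric.ball (0 : Fin m → ℝ) s) ≤ μH[(m:ℝ)] A := by
    calc μH[(m:ℝ)] (Metric.ball (0 : Fin m → ℝ) s) = μH[(m:ℝ)] (⇑e '' A) := by rw [himg]
      _ ≤ (1 : ℝ≥0) ^ (m:ℝ) * μH[(m:ℝ)] A := hlip.hausdorffMeasure_image_le (by positivity) A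
      _ = μH[(m:ℝ)] A := by simp
  have h3 : μH[(m:ℝ)] (Metric.ball (0 : Fin m → ℝ) s) = ENNReal.ofReal ((2*s)^m) := by
    have : ((m:ℝ)) = ((Fintype.card (Fin m) : ℕ) : ℝ) := by simp
    rw [this, hausdorffMeasure_pi_real, Real.volume_pi_ball _ hs0, Fintype.card_fin]
  have h4 : (2 / Real.sqrt m) ^ m * u ^ m = (2*s)^m := by
    rw [← mul_pow]
    congr 1
    rw [hs]; ring
  calc ENNReal.ofReal ((2 / Real.sqrt m) ^ m * u ^ m) = ENNReal.ofReal ((2*s)^m) := by rw [h4]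
    _ = μH[(m:ℝ)] (Metric.ball (0 : Fin m → ℝ) s) := h3.symm
    _ ≤ μH[(m:ℝ)] A := h2
    _ ≤ μH[(m:ℝ)] (Metric.ball 0 u) := measure_mono hsub


lemma norm_graph_le {n m : ℕ} (f : EuclideanSpace ℝ (Fin m) →ₗᵢ[ℝ] EuclideanSpace ℝ (Fin n))
    (e : EuclideanSpace ℝ (Fin n)) (he : ‖e‖ = 1)
    (horth : ∀ v, (inner ℝ (f v) e : ℝ) = 0) (M : ℝ) (hM : 0 ≤ M)
    (v : EuclideanSpace ℝ (Fin m)) (t : ℝ) (ht : |t| ≤ M * ‖v‖) :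
    ‖f v + t • e‖ ≤ Real.sqrt (1 + M ^ 2) * ‖v‖ := by
  have h1 : ‖f v + t • e‖ ^ 2 = ‖v‖ ^ 2 + t ^ 2 := by
    rw [norm_add_sq_real, inner_smul_right, horth, f.norm_map, norm_smul, he]
    simp [Real.norm_eq_abs, sq_abs]
  have h2 : ‖f v + t • e‖ ^ 2 ≤ (1 + M ^ 2) * ‖v‖ ^ 2 := by
    rw [h1]
    have : t ^ 2 ≤ (M * ‖v‖) ^ 2 := by
      rw [← sq_abs t]
      exact pow_le_pow_left₀ (abs_nonneg t) ht 2
    nlinarith [norm_nonneg v]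
  calc ‖f v + t • e‖ = Real.sqrt (‖f v + t • e‖ ^ 2) := (Real.sqrt_sq (norm_nonneg _)).symm
    _ ≤ Real.sqrt ((1 + M ^ 2) * ‖v‖ ^ 2) := Real.sqrt_le_sqrt h2
    _ = Real.sqrt (1 + M ^ 2) * ‖v‖ := by
        rw [Real.sqrt_mul (by positivity), Real.sqrt_sq (norm_nonneg v)]

lemma mem_D_of_path {n m : ℕ} (Ω U D Λ : Set (EuclideanSpace ℝ (Fin n)))
    (hU : IsOpen U) (hD : D = U ∩ frontier Ω)
    (hΛ : Λ = closure D ∩ (frontier Ω \ D))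
    (p : EuclideanSpace ℝ (Fin n)) (hp : p ∈ D)
    (f : EuclideanSpace ℝ (Fin m) →ₗᵢ[ℝ] EuclideanSpace ℝ (Fin n))
    (e : EuclideanSpace ℝ (Fin n)) (φ : EuclideanSpace ℝ (Fin m) → ℝ)
    (hφc : Continuous φ) (hφ0 : φ 0 = 0) (v : EuclideanSpace ℝ (Fin m))
    (hfr : ∀ t : ℝ, t ∈ Icc (0:ℝ) 1 → p + f (t • v) + φ (t • v) • e ∈ frontier Ω)
    (hnΛ : ∀ t : ℝ, t ∈ Icc (0:ℝ) 1 → p + f (t • v) + φ (t • v) • e ∉ Λ) :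
    p + f v + φ v • e ∈ D := by
  set γ : ℝ → EuclideanSpace ℝ (Fin n) := fun t => p + f (t • v) + φ (t • v) • e with hγ
  have hγc : Continuous γ := by
    have h1 : Continuous fun t : ℝ => t • v := continuous_id.smul continuous_const
    exact (continuous_const.add (f.continuous.comp h1)).add
      (((hφc.comp h1)).smul continuous_const)
  have hγ0 : γ 0 = p := by simp [hγ, hφ0]
  have hcover : Icc (0:ℝ) 1 ⊆ γ ⁻¹' U ∪ γ ⁻¹' (closure D)ᶜ := by
    intro t ht
    by_cases hcd : γ t ∈ closure D
    · left
      have hfr' := hfr t ht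
      by_cases hd : γ t ∈ D
      · exact (hD ▸ hd).1
      · exact absurd (hΛ ▸ ⟨hcd, hfr', hd⟩) (hnΛ t ht)
    · right; exact hcd
  have h0 : (Icc (0:ℝ) 1 ∩ γ ⁻¹' U).Nonempty := ⟨0, ⟨le_refl _, zero_le_one⟩, by
    show γ 0 ∈ U; rw [hγ0]; exact (hD ▸ hp).1⟩
  have hempty : ¬ (Icc (0:ℝ) 1 ∩ γ ⁻¹' (closure D)ᶜ).Nonempty := by
    intro hne
    obtain ⟨t, ht, htU, htC⟩ := isPreconnected_Icc (γ ⁻¹' U) (γ ⁻¹' (closure D)ᶜ)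
      (hU.preimage hγc) (isClosed_closure.isOpen_compl.preimage hγc) hcover h0 hne
    have : γ t ∈ D := hD ▸ ⟨htU, hfr t ht⟩
    exact htC (subset_closure this)
  have h1cd : γ 1 ∈ closure D := by
    by_contra hc
    exact hempty ⟨1, ⟨zero_le_one, le_refl _⟩, hc⟩
  have h1D : γ 1 ∈ D := by
    by_contra hd
    exact hnΛ 1 ⟨zero_le_one, le_refl _⟩ (hΛ ▸ ⟨h1cd, hfr 1 ⟨zero_le_one, le_refl _⟩, hd⟩)
  simpa [hγ] using h1D


set_option maxHeartbeats 2000000 in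
theorem main (n : ℕ) (hn : 2 ≤ n) (M : ℝ) :
    ∃ c > 0, ∀ (r₀ : ℝ) (Ω D Λ : Set (EuclideanSpace ℝ (Fin n))),
      (IsOpen Ω ∧ IsConnected Ω ∧ Bornology.IsBounded Ω ∧ 0 < M ∧ 0 < r₀ ∧
  ∀ x ∈ frontier Ω,
    ∃ (f : EuclideanSpace ℝ (Fin (n - 1)) →ₗᵢ[ℝ] EuclideanSpace ℝ (Fin n))
      (e : EuclideanSpace ℝ (Fin n)) (φ : EuclideanSpace ℝ (Fin (n - 1)) → ℝ),
      ‖e‖ = 1 ∧ (∀ v, (inner ℝ (f v) e : ℝ) = 0) ∧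
      LipschitzWith M.toNNReal φ ∧ φ 0 = 0 ∧
      ∀ s : ℝ, 0 < s → s ≤ 100 * r₀ * Real.sqrt (1 + M ^ 2) →
        (Ω ∩ {y | ∃ v t, ‖v‖ < s ∧ |t| < (1 + M) * s ∧ y = x + f v + t • e}
          = {y | ∃ v t, ‖v‖ < s ∧ |t| < (1 + M) * s ∧ φ v < t ∧ y = x + f v + t • e}) ∧
        (frontier Ω ∩ {y | ∃ v t, ‖v‖ < s ∧ |t| < (1 + M) * s ∧ y = x + f v + t • e}
          = {y | ∃ v t, ‖v‖ < s ∧ |t| < (1 + M) * s ∧ φ v = t ∧ y = x + f v + t • e})) →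
      (∃ U, IsOpen U ∧ D = U ∩ frontier Ω) →
      Λ = closure D ∩ (frontier Ω \ D) →
      (∀ x ∈ Λ, ∀ r : ℝ, 0 < r → r < r₀ →
        ∃ x' ∈ D, dist x x' < r ∧ M⁻¹ * r < Metric.infDist x' Λ) →
      ∀ x ∈ D, ∀ r : ℝ, 0 < r → r < r₀ →
        ENNReal.ofReal (c * r ^ ((n : ℝ) - 1))
          ≤ μH[(n : ℝ) - 1] (Metric.ball x r ∩ frontier Ω ∩ D) := by
  set m := n - 1 with hmdef
  have hm0 : 0 < m := by omega
  have hm' : (0:ℝ) < (m:ℕ) := by exact_mod_cast hm0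
  have hcast : ((m : ℕ) : ℝ) = (n : ℝ) - 1 := by
    have : (1:ℕ) ≤ n := by omega
    push_cast [hmdef, Nat.cast_sub this]
    ring
  set K := Real.sqrt (1 + M ^ 2) with hKdef
  have hK1 : 1 ≤ K := by
    nlinarith [Real.sq_sqrt (show (0:ℝ) ≤ 1 + M ^ 2 by positivity),
      Real.sqrt_nonneg (1 + M ^ 2)]
  have hK0 : (0:ℝ) < K := lt_of_lt_of_le one_pos hK1
  set B := 8 * K * max 1 M with hBdef
  have hB8 : 8 ≤ B := by
    have h1 : (1:ℝ) ≤ max 1 M := le_max_left 1 M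
    nlinarith
  have hB0 : (0:ℝ) < B := by linarith
  have hsm : 0 < Real.sqrt m := Real.sqrt_pos.2 hm'
  refine ⟨(2 / Real.sqrt m) ^ m / B ^ m,
    div_pos (pow_pos (div_pos two_pos hsm) m) (pow_pos hB0 m), ?_⟩
  intro r₀ Ω D Λ hLip hDopen hΛ hCork x hx r hr0 hrr₀
  obtain ⟨U, hU, hD⟩ := hDopen
  obtain ⟨hΩopen, hΩconn, hΩbd, hM, hr₀, hchart⟩ := hLip
  have hMnn : (0:ℝ) ≤ M := hM.le
  set u := r / B with hudef
  have hu0 : 0 < u := by positivity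
  have hBu : B * u = r := by
    rw [hudef]; field_simp
  have hKu : K * u ≤ r / 8 := by
    have h1 : (1:ℝ) ≤ max 1 M := le_max_left 1 M
    have h2 : 8 * K ≤ B := by rw [hBdef]; nlinarith
    have h3 : 0 ≤ u := hu0.le
    nlinarith [hBu]
  have hKu0 : 0 < K * u := by positivity
  -- step 1: find the center point p
  have hclaim : ∃ p ∈ D, dist p x ≤ 3/4 * r ∧ ∀ z ∈ Λ, 2 * (K * u) ≤ dist p z := by
    by_cases hcase : ∃ z ∈ Λ, dist x z < r / 2
    · obtain ⟨z, hzΛ, hxz⟩ := hcase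
      obtain ⟨p, hpD, hzp, hinf⟩ := hCork z hzΛ (r/4) (by positivity) (by linarith)
      refine ⟨p, hpD, ?_, ?_⟩
      · calc dist p x ≤ dist p z + dist z x := dist_triangle p z x
          _ = dist z p + dist x z := by rw [dist_comm p z, dist_comm z x]
          _ ≤ r/4 + r/2 := by linarith
          _ = 3/4 * r := by ring
      · intro z' hz'
        have h1 : Metric.infDist p Λ ≤ dist p z' := Metric.infDist_le_dist_of_mem hz'
        have h2 : 2 * (K * u) ≤ M⁻¹ * (r/4) := by
          have hMle : M ≤ max 1 M := le_max_right 1 M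
          have h9 : 8 * K * M ≤ B := by
            rw [hBdef]
            exact mul_le_mul_of_nonneg_left hMle (by positivity)
          have h8 : 8 * K * M * u ≤ r := by
            calc 8 * K * M * u ≤ B * u := mul_le_mul_of_nonneg_right h9 hu0.le
              _ = r := hBu
          have e2 : M⁻¹ * (r/4) = r / (4 * M) := by
            rw [inv_mul_eq_div, div_div]
          rw [e2, le_div_iff₀ (by positivity)]
          calc 2 * (K * u) * (4 * M) = 8 * K * M * u := by ring
            _ ≤ r := h8
        linarith
    · push_neg at hcase
      refine ⟨x, hx, by rw [dist_self]; positivity, ?_⟩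
      intro z hz
      have := hcase z hz
      linarith
  obtain ⟨p, hpD, hpx, hpΛ⟩ := hclaim
  have hpfr : p ∈ frontier Ω := (hD ▸ hpD).2
  obtain ⟨f, e, φ, he, horth, hφ, hφ0, hch⟩ := hchart p hpfr
  have hu100 : u ≤ 100 * r₀ * Real.sqrt (1 + M ^ 2) := by
    have h1 : u ≤ r / 8 := by
      rw [hudef]; apply div_le_div_of_nonneg_left hr0.le (by norm_num) hB8
    have h2 : r₀ ≤ 100 * r₀ * K := by nlinarith
    rw [← hKdef]
    linarith
  obtain ⟨hchΩ, hchF⟩ := hch u hu0 hu100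
  have hφabs : ∀ w, |φ w| ≤ M * ‖w‖ := by
    intro w
    have h1 := hφ.dist_le_mul w 0
    rw [hφ0, Real.dist_eq, sub_zero, dist_zero_right] at h1
    rwa [Real.coe_toNNReal M hMnn] at h1
  -- graph points: basic facts
  have hbound : ∀ w : EuclideanSpace ℝ (Fin m), ‖f w + φ w • e‖ ≤ K * ‖w‖ := fun w =>
    norm_graph_le f e he horth M hMnn w (φ w) (hφabs w)
  have hfrmem : ∀ w : EuclideanSpace ℝ (Fin m), ‖w‖ < u → p + f w + φ w • e ∈ frontier Ω := by
    intro w hw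
    have hφw : |φ w| < (1 + M) * u := by
      have h1 := hφabs w
      have h2 : M * ‖w‖ ≤ M * u := mul_le_mul_of_nonneg_left hw.le hMnn
      nlinarith
    have hmem : p + f w + φ w • e ∈
        {y | ∃ v t, ‖v‖ < u ∧ |t| < (1 + M) * u ∧ φ v = t ∧ y = p + f v + t • e} :=
      ⟨w, φ w, hw, hφw, rfl, rfl⟩
    have : p + f w + φ w • e ∈ frontier Ω ∩
        {y | ∃ v t, ‖v‖ < u ∧ |t| < (1 + M) * u ∧ y = p + f v + t • e} := by
      rw [hchF]; exact hmem
    exact this.1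
  have hdistp : ∀ w : EuclideanSpace ℝ (Fin m), dist (p + f w + φ w • e) p ≤ K * ‖w‖ := by
    intro w
    have h1 : p + f w + φ w • e - p = f w + φ w • e := by abel
    rw [dist_eq_norm, h1]
    exact hbound w
  -- membership in D
  have hDmem : ∀ v : EuclideanSpace ℝ (Fin m), ‖v‖ < u → p + f v + φ v • e ∈ D := by
    intro v hv
    apply mem_D_of_path Ω U D Λ hU hD hΛ p hpD f e φ hφ.continuous hφ0 v
    · intro t ht
      apply hfrmem
      calc ‖t • v‖ = |t| * ‖v‖ := by rw [norm_smul, Real.norm_eq_abs]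
        _ ≤ 1 * ‖v‖ := by
            apply mul_le_mul_of_nonneg_right _ (norm_nonneg v)
            rw [abs_le]; exact ⟨by linarith [ht.1], ht.2⟩
        _ = ‖v‖ := one_mul _
        _ < u := hv
    · intro t ht hmem
      have h1 := hpΛ _ hmem
      have h2 : dist p (p + f (t • v) + φ (t • v) • e) ≤ K * ‖t • v‖ := by
        rw [dist_comm]; exact hdistp _
      have h3 : ‖t • v‖ ≤ ‖v‖ := by
        rw [norm_smul, Real.norm_eq_abs]
        calc |t| * ‖v‖ ≤ 1 * ‖v‖ := by
              apply mul_le_mul_of_nonneg_right _ (norm_nonneg v)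
              rw [abs_le]; exact ⟨by linarith [ht.1], ht.2⟩
          _ = ‖v‖ := one_mul _
      have h4 : K * ‖t • v‖ < K * u := by
        apply mul_lt_mul_of_pos_left _ hK0
        exact lt_of_le_of_lt h3 hv
      linarith
  -- the graph patch
  set G := (fun v : EuclideanSpace ℝ (Fin m) => p + f v + φ v • e) '' Metric.ball 0 u with hGdef
  have hGsub : G ⊆ Metric.ball x r ∩ frontier Ω ∩ D := by
    rintro _ ⟨v, hv, rfl⟩
    rw [mem_ball_zero_iff] at hv
    refine ⟨⟨?_, hfrmem v hv⟩, hDmem v hv⟩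
    rw [Metric.mem_ball]
    calc dist (p + f v + φ v • e) x ≤ dist (p + f v + φ v • e) p + dist p x :=
          dist_triangle _ _ _
      _ ≤ K * ‖v‖ + 3/4 * r := add_le_add (hdistp v) hpx
      _ < K * u + 3/4 * r := by
          have := mul_lt_mul_of_pos_left hv hK0; linarith
      _ ≤ r/8 + 3/4 * r := by linarith
      _ < r := by linarith
  -- projection
  set Q := ContinuousLinearMap.adjoint f.toContinuousLinearMap with hQdef
  have hQf : ∀ w, Q (f w) = w := by
    intro w
    apply ext_inner_left ℝ
    intro w'
    rw [hQdef, ContinuousLinearMap.adjoint_inner_right]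
    simp only [LinearIsometry.coe_toContinuousLinearMap]
    exact f.inner_map_map w' w
  have hQe : Q e = 0 := by
    apply ext_inner_left ℝ
    intro w'
    rw [hQdef, ContinuousLinearMap.adjoint_inner_right]
    simp only [LinearIsometry.coe_toContinuousLinearMap, inner_zero_right]
    exact horth w'
  have hQnorm : ‖Q‖ ≤ 1 := by
    rw [hQdef, ContinuousLinearMap.adjoint.norm_map]
    exact ContinuousLinearMap.opNorm_le_bound _ zero_le_one (fun z => by simp)
  have hlipg : LipschitzWith 1 (fun z => Q (z - p)) := by
    apply LipschitzWith.of_dist_le_mul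
    intro z w
    have h1 : Q (z - p) - Q (w - p) = Q (z - w) := by rw [← map_sub]; congr 1; abel
    have h2 : dist (Q (z - p)) (Q (w - p)) ≤ dist z w := by
      rw [dist_eq_norm, dist_eq_norm, h1]
      calc ‖Q (z - w)‖ ≤ ‖Q‖ * ‖z - w‖ := Q.le_opNorm _
        _ ≤ 1 * ‖z - w‖ := mul_le_mul_of_nonneg_right hQnorm (norm_nonneg _)
        _ = ‖z - w‖ := one_mul _
    simpa using h2
  have himgG : Metric.ball (0 : EuclideanSpace ℝ (Fin m)) u ⊆ (fun z => Q (z - p)) '' G := by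
    intro v hv
    refine ⟨p + f v + φ v • e, ⟨v, hv, rfl⟩, ?_⟩
    show Q (p + f v + φ v • e - p) = v
    have h1 : p + f v + φ v • e - p = f v + φ v • e := by abel
    rw [h1, map_add, _root_.map_smul, hQf, hQe, smul_zero, add_zero]
  -- measure chain
  have hmnonneg : (0:ℝ) ≤ (m : ℝ) := hm'.le
  have step1 : μH[(m:ℝ)] (Metric.ball (0 : EuclideanSpace ℝ (Fin m)) u) ≤ μH[(m:ℝ)] G := by
    calc μH[(m:ℝ)] (Metric.ball (0 : EuclideanSpace ℝ (Fin m)) u)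
        ≤ μH[(m:ℝ)] ((fun z => Q (z - p)) '' G) := measure_mono himgG
      _ ≤ (1:ℝ≥0) ^ (m:ℝ) * μH[(m:ℝ)] G := hlipg.hausdorffMeasure_image_le hmnonneg G
      _ = μH[(m:ℝ)] G := by simp
  rw [← hcast, Real.rpow_natCast]
  have hfinal : (2 / Real.sqrt m) ^ m / B ^ m * r ^ m = (2 / Real.sqrt m) ^ m * u ^ m := by
    rw [hudef, div_pow]
    ring
  rw [hfinal]
  calc ENNReal.ofReal ((2 / Real.sqrt m) ^ m * u ^ m)
      ≤ μH[(m:ℝ)] (Metric.ball (0 : EuclideanSpace ℝ (Fin m)) u) :=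
        ball_hausdorff_lb m hm0 u hu0
    _ ≤ μH[(m:ℝ)] G := step1
    _ ≤ μH[(m:ℝ)] (Metric.ball x r ∩ frontier Ω ∩ D) := measure_mono hGsub


/-- Lemma 2.3, estimate (2.4): `σ(Δ_r(x) ∩ D) ≥ c r^{n-1}` for `x ∈ D`. -/
theorem statement5 (n : ℕ) (hn : 2 ≤ n) (M : ℝ) :
    ∃ c > 0, ∀ (r₀ : ℝ) (Ω D Λ : Set (EuclideanSpace ℝ (Fin n))),
      IsLipschitzDomain n M r₀ Ω →
      (∃ U, IsOpen U ∧ D = U ∩ frontier Ω) →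
      Λ = closure D ∩ (frontier Ω \ D) →
      Corkscrew n M r₀ D Λ →
      ∀ x ∈ D, ∀ r : ℝ, 0 < r → r < r₀ →
        ENNReal.ofReal (c * r ^ ((n : ℝ) - 1))
          ≤ μH[(n : ℝ) - 1] (Metric.ball x r ∩ frontier Ω ∩ D) := by
  exact main n hn M
end
end

section
/- Let Ω ⊆ ℝⁿ (n ≥ 2) be a bounded Lipschitz domain with constant M and scale r₀, let D be a relatively open subset of ∂Ω with relative boundary Λ, δ(y) = dist(y, Λ), and assume Λ is Ahlfors (n−2+ε)-regular with constant M at scales below r₀, where ε ≥ 0. Then there is a constant C > 0, depending only on n, M, ε, r₀ and the diameter of Ω, such that for every 0 < t < r₀ the Lebesgue measure of the set C_t = {y ∈ Ω : t < δ(y) < 2t} is at most C·t^{2−ε}. -/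
open MeasureTheory Metric Set
open scoped RealInnerProductSpace ENNReal NNReal

noncomputable section

/-- The Hausdorff measure `μH[d]` of a compact Ahlfors `d`-regular set is finite. -/
lemma aux_hausdorff_finite (n : ℕ) (d M r₀ : ℝ) (hr₀ : 0 < r₀)
    (Λ : Set (EuclideanSpace ℝ (Fin n))) (hcomp : IsCompact Λ)
    (hA : AhlforsRegular n d M r₀ Λ) : μH[d] Λ ≠ ⊤ := by
  have hcov : Λ ⊆ ⋃ x ∈ Λ, ball x (r₀ / 2) := fun x hx =>
    mem_biUnion hx (mem_ball_self (by linarith))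
  obtain ⟨s, hsΛ, hsfin, hscov⟩ :=
    hcomp.elim_finite_subcover_image (fun x _ => isOpen_ball) hcov
  intro htop
  have h1 : μH[d] Λ ≤ ∑ x ∈ hsfin.toFinset, μH[d] (ball x (r₀ / 2) ∩ Λ) := by
    refine le_trans (measure_mono ?_) (measure_biUnion_finset_le _ _)
    intro y hy
    obtain ⟨x, hxs, hxy⟩ := mem_iUnion₂.1 (hscov hy)
    exact mem_iUnion₂.2 ⟨x, hsfin.mem_toFinset.2 hxs, hxy, hy⟩
  have h2 : ∀ x ∈ hsfin.toFinset, μH[d] (ball x (r₀ / 2) ∩ Λ) ≤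
      ENNReal.ofReal (M * (r₀ / 2) ^ d) := fun x hx =>
    (hA x (hsΛ (hsfin.mem_toFinset.1 hx)) (r₀ / 2) (by linarith) (by linarith)).2
  have h3 : μH[d] Λ ≤ ∑ _x ∈ hsfin.toFinset, ENNReal.ofReal (M * (r₀ / 2) ^ d) :=
    h1.trans (Finset.sum_le_sum h2)
  rw [htop] at h3
  simp only [Finset.sum_const, nsmul_eq_mul] at h3
  exact (lt_irrefl ⊤ (h3.trans_lt (by
    exact ENNReal.mul_lt_top (ENNReal.natCast_lt_top _) ENNReal.ofReal_lt_top))).elim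

/-- `|C_t| ≤ C t^{2-ε}` where `C_t = {y ∈ Ω : t < δ(y) < 2t}`. -/
theorem statement9 (n : ℕ) (hn : 2 ≤ n) (M r₀ ε : ℝ) (hε : 0 ≤ ε)
    (Ω D Λ : Set (EuclideanSpace ℝ (Fin n)))
    (hΩ : IsLipschitzDomain n M r₀ Ω)
    (hD : ∃ U, IsOpen U ∧ D = U ∩ frontier Ω)
    (hΛ : Λ = closure D ∩ (frontier Ω \ D))
    (hA : AhlforsRegular n ((n : ℝ) - 2 + ε) M r₀ Λ) :
    ∃ C > 0, ∀ t : ℝ, 0 < t → t < r₀ →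
      volume {y ∈ Ω | t < Metric.infDist y Λ ∧ Metric.infDist y Λ < 2 * t}
        ≤ ENNReal.ofReal (C * t ^ (2 - ε)) := by
  obtain ⟨hopen, hconn, hbd, hM, hr₀, -⟩ := hΩ
  rcases eq_empty_or_nonempty Λ with rfl | hne
  · refine ⟨1, one_pos, fun t ht _ => ?_⟩
    have : {y ∈ Ω | t < Metric.infDist y (∅ : Set (EuclideanSpace ℝ (Fin n))) ∧
        Metric.infDist y (∅ : Set (EuclideanSpace ℝ (Fin n))) < 2 * t} = ∅ := by
      ext y
      simp only [mem_setOf_eq, mem_empty_iff_false, iff_false, not_and,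
        Metric.infDist_empty]
      intro _ h
      linarith
    rw [this, measure_empty]
    exact zero_le
  -- Λ is compact
  set d : ℝ := (n : ℝ) - 2 + ε with hd_def
  have hd : 0 ≤ d := by
    have : (2 : ℝ) ≤ (n : ℝ) := by exact_mod_cast hn
    simp only [hd_def]; linarith
  have hΛcl : IsClosed Λ := by
    obtain ⟨U, hU, rfl⟩ := hD
    have h1 : frontier Ω \ (U ∩ frontier Ω) = frontier Ω ∩ Uᶜ := by
      ext y; simp only [mem_diff, mem_inter_iff, mem_compl_iff]; tauto
    rw [hΛ, h1]
    exact isClosed_closure.inter (isClosed_frontier.inter hU.isClosed_compl)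
  have hΛbd : Bornology.IsBounded Λ := by
    refine (hbd.closure.subset ?_)
    rw [hΛ]
    exact fun y hy => frontier_subset_closure hy.2.1
  have hcomp : IsCompact Λ := Metric.isCompact_of_isClosed_isBounded hΛcl hΛbd
  have hK : μH[d] Λ ≠ ⊤ := aux_hausdorff_finite n d M r₀ hr₀ Λ hcomp hA
  set K : ℝ := (μH[d] Λ).toReal with hK_def
  have hKnn : 0 ≤ K := ENNReal.toReal_nonneg
  set ι : ℝ≥0∞ := volume (ball (0 : EuclideanSpace ℝ (Fin n)) 1) with hι_def
  have hιfin : ι ≠ ⊤ := measure_ball_lt_top.ne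
  set ιr : ℝ := ι.toReal with hιr_def
  have hιnn : 0 ≤ ιr := ENNReal.toReal_nonneg
  refine ⟨K * M * 2 ^ d * 4 ^ n * ιr + 1, by positivity, fun t ht htr₀ => ?_⟩
  -- Vitali covering
  obtain ⟨u, huΛ, hdisj, hcov⟩ :=
    Vitali.exists_disjoint_subfamily_covering_enlargement_closedBall Λ (id : EuclideanSpace ℝ (Fin n) → EuclideanSpace ℝ (Fin n))
      (fun _ => t / 2) (t / 2) (fun a _ => le_rfl) 4 (by norm_num)
  -- the disjoint sets
  set A : EuclideanSpace ℝ (Fin n) → Set (EuclideanSpace ℝ (Fin n)) := fun b => ball b (t / 2) ∩ Λ with hA_def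
  have hAsub : ∀ b, A b ⊆ closedBall b (t / 2) := fun b =>
    (inter_subset_left).trans ball_subset_closedBall
  have hAΛ : ∀ b, A b ⊆ Λ := fun b => inter_subset_right
  have hAmeas : ∀ b, MeasurableSet (A b) := fun b =>
    measurableSet_ball.inter hΛcl.measurableSet
  have hlow : ∀ b ∈ u, ENNReal.ofReal (M⁻¹ * (t / 2) ^ d) ≤ μH[d] (A b) := fun b hb =>
    (hA b (huΛ hb) (t / 2) (by linarith) (by linarith)).1
  have hεpos : (0 : ℝ≥0∞) < ENNReal.ofReal (M⁻¹ * (t / 2) ^ d) := by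
    refine ENNReal.ofReal_pos.2 (mul_pos (inv_pos.2 hM) (Real.rpow_pos_of_pos (by linarith) d))
  have hdisj' : Pairwise (Function.onFun Disjoint fun b : ↥u => A b) := by
    intro i j hij
    have hne' : (i : EuclideanSpace ℝ (Fin n)) ≠ j := fun h => hij (Subtype.ext h)
    exact (hdisj i.2 j.2 hne').mono (hAsub i) (hAsub j)
  have hufin : u.Finite := by
    have hfin : Set.Finite {b : ↥u | ENNReal.ofReal (M⁻¹ * (t / 2) ^ d) ≤ μH[d] (A b)} :=
      MeasureTheory.Measure.finite_const_le_meas_of_disjoint_iUnion (μH[d]) hεpos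
        (fun b : ↥u => hAmeas b) hdisj'
        (ne_top_of_le_ne_top hK (measure_mono (iUnion_subset fun b => hAΛ b)))
    have : Set.Finite (Set.univ : Set ↥u) :=
      hfin.subset (fun b _ => hlow b b.2)
    rw [Set.finite_univ_iff] at this
    exact Set.finite_coe_iff.mp this
  set F : Finset (EuclideanSpace ℝ (Fin n)) := hufin.toFinset with hF_def
  have hFu : ∀ b ∈ F, b ∈ u := fun b hb => hufin.mem_toFinset.1 hb
  -- cardinality bound
  have hcard : (F.card : ℝ≥0∞) * ENNReal.ofReal (M⁻¹ * (t / 2) ^ d) ≤ μH[d] Λ := by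
    calc (F.card : ℝ≥0∞) * ENNReal.ofReal (M⁻¹ * (t / 2) ^ d)
        = ∑ _b ∈ F, ENNReal.ofReal (M⁻¹ * (t / 2) ^ d) := by
          rw [Finset.sum_const, nsmul_eq_mul]
      _ ≤ ∑ b ∈ F, μH[d] (A b) := Finset.sum_le_sum (fun b hb => hlow b (hFu b hb))
      _ = μH[d] (⋃ b ∈ F, A b) := by
          refine (measure_biUnion_finset ?_ (fun b _ => hAmeas b)).symm
          intro i hi j hj hij
          exact (hdisj (hFu i hi) (hFu j hj) hij).mono (hAsub i) (hAsub j)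
      _ ≤ μH[d] Λ := measure_mono (iUnion₂_subset fun b _ => hAΛ b)
  -- real cardinality bound
  have hcardR : (F.card : ℝ) * (M⁻¹ * (t / 2) ^ d) ≤ K := by
    have h1 : ((F.card : ℝ≥0∞) * ENNReal.ofReal (M⁻¹ * (t / 2) ^ d)).toReal ≤ K :=
      ENNReal.toReal_mono hK hcard
    rw [ENNReal.toReal_mul, ENNReal.toReal_ofReal (by positivity)] at h1
    simpa using h1
  -- covering of C_t
  have hsubset : {y ∈ Ω | t < Metric.infDist y Λ ∧ Metric.infDist y Λ < 2 * t} ⊆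
      ⋃ b ∈ F, closedBall b (4 * t) := by
    intro y hy
    obtain ⟨a, haΛ, hay⟩ := (Metric.infDist_lt_iff hne).1 hy.2.2
    obtain ⟨b, hbu, hb⟩ := hcov a haΛ
    have ha : a ∈ closedBall b (4 * (t / 2)) := hb (mem_closedBall_self (by linarith))
    rw [mem_closedBall] at ha
    refine mem_iUnion₂.2 ⟨b, hufin.mem_toFinset.2 hbu, ?_⟩
    rw [mem_closedBall]
    calc dist y b ≤ dist y a + dist a b := dist_triangle y a b
      _ ≤ 2 * t + 4 * (t / 2) := add_le_add hay.le ha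
      _ = 4 * t := by ring
  -- volume bound
  have hvol : volume {y ∈ Ω | t < Metric.infDist y Λ ∧ Metric.infDist y Λ < 2 * t}
      ≤ (F.card : ℝ≥0∞) * (ENNReal.ofReal ((4 * t) ^ n) * ι) := by
    calc volume {y ∈ Ω | t < Metric.infDist y Λ ∧ Metric.infDist y Λ < 2 * t}
        ≤ volume (⋃ b ∈ F, closedBall b (4 * t)) := measure_mono hsubset
      _ ≤ ∑ b ∈ F, volume (closedBall b (4 * t)) := measure_biUnion_finset_le _ _
      _ = (F.card : ℝ≥0∞) * (ENNReal.ofReal ((4 * t) ^ n) * ι) := by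
          have : ∀ b : EuclideanSpace ℝ (Fin n), volume (closedBall b (4 * t)) =
              ENNReal.ofReal ((4 * t) ^ n) * ι := by
            intro b
            rw [hι_def, MeasureTheory.Measure.addHaar_closedBall volume b (by linarith)]
            congr 2
            exact congrArg _ finrank_euclideanSpace_fin
          simp only [this, Finset.sum_const, nsmul_eq_mul]
  refine hvol.trans ?_
  -- compare with the final bound
  have hfinal : (F.card : ℝ) * ((4 * t) ^ n * ιr) ≤
      (K * M * 2 ^ d * 4 ^ n * ιr + 1) * t ^ (2 - ε) := by
    have htd : (0:ℝ) < t ^ d := Real.rpow_pos_of_pos ht d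
    have h2d : (0:ℝ) < (2:ℝ) ^ d := Real.rpow_pos_of_pos two_pos d
    have hhalf : ((t / 2) : ℝ) ^ d = t ^ d / 2 ^ d :=
      Real.div_rpow ht.le (by norm_num : (0:ℝ) ≤ 2) d
    have hcard2 : (F.card : ℝ) ≤ K * M * 2 ^ d / t ^ d := by
      rw [hhalf] at hcardR
      rw [le_div_iff₀ htd]
      have hMne : M ≠ 0 := ne_of_gt hM
      have h2ne : (2:ℝ) ^ d ≠ 0 := ne_of_gt h2d
      calc (F.card : ℝ) * t ^ d
          = (F.card : ℝ) * (M⁻¹ * (t ^ d / 2 ^ d)) * (M * 2 ^ d) := by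
            field_simp
        _ ≤ K * (M * 2 ^ d) := mul_le_mul_of_nonneg_right hcardR (by positivity)
        _ = K * M * 2 ^ d := by ring
    have htn : (t:ℝ) ^ n = t ^ (n:ℝ) := (Real.rpow_natCast t n).symm
    have hsub : t ^ ((n:ℝ)) / t ^ d = t ^ (2 - ε) := by
      rw [← Real.rpow_sub ht]
      congr 1
      simp only [hd_def]; ring
    have h1 : (F.card : ℝ) * ((4 * t) ^ n * ιr) ≤
        (K * M * 2 ^ d / t ^ d) * ((4 * t) ^ n * ιr) := by
      refine mul_le_mul_of_nonneg_right hcard2 (by positivity)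
    refine h1.trans ?_
    have : (K * M * 2 ^ d / t ^ d) * ((4 * t) ^ n * ιr)
        = K * M * 2 ^ d * 4 ^ n * ιr * (t ^ (n:ℝ) / t ^ d) := by
      rw [mul_pow, ← htn]; ring
    rw [this, hsub]
    have hrpow : (0:ℝ) ≤ t ^ (2 - ε) := (Real.rpow_pos_of_pos ht _).le
    nlinarith [hrpow]
  calc (F.card : ℝ≥0∞) * (ENNReal.ofReal ((4 * t) ^ n) * ι)
      = ENNReal.ofReal ((F.card : ℝ) * ((4 * t) ^ n * ιr)) := by
        rw [ENNReal.ofReal_mul (by positivity), ENNReal.ofReal_mul (by positivity),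
          ENNReal.ofReal_natCast, hιr_def, ENNReal.ofReal_toReal hιfin]
    _ ≤ ENNReal.ofReal ((K * M * 2 ^ d * 4 ^ n * ιr + 1) * t ^ (2 - ε)) :=
        ENNReal.ofReal_le_ofReal hfinal
end
end

section
/- Let (X, 𝒜, ν) be a measure space, let Δ ∈ 𝒜 with 0 < ν(Δ) < ∞, and let μ : X → [0, ∞) be measurable with μ > 0 ν-a.e. on Δ, ∫_Δ μ dν ∈ (0, ∞), and ∫_Δ μ^{−1/(r−1)} dν < ∞. Let 1 < r < p < ∞, put p′ = p/(p−1), α = (p−1)/(r−1), and w = μ^{−p′/p} = μ^{−1/(p−1)}. Suppose the A_r condition holds on Δ with constant A ≥ 1: ((1/ν(Δ))·∫_Δ μ dν) · ((1/ν(Δ))·∫_Δ μ^{−1/(r−1)} dν)^{r−1} ≤ A. Then: (i) (1/ν(Δ))·∫_Δ w^α dν ≤ A^{1/(r−1)} · ((1/ν(Δ))·∫_Δ w dν)^α; and (ii) for every measurable set E ⊆ Δ, ∫_E w dν ≤ A^{1/(p−1)} · (ν(E)/ν(Δ))^{(p−r)/(p−1)} · ∫_Δ w dν. -/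
open MeasureTheory
open scoped ENNReal

noncomputable section

private lemma alg1 {r p A v m s w : ℝ} (hr : 1 < r) (hrp : r < p) (hA : 1 ≤ A)
    (hv : 0 < v) (hm : 0 < m) (hs : 0 < s) (hw : 0 < w)
    (h1 : (v⁻¹ * m) * (v⁻¹ * s) ^ (r - 1) ≤ A)
    (h2 : v ≤ m ^ (1/p) * w ^ ((p-1)/p)) :
    v⁻¹ * s ≤ A ^ (1/(r-1)) * (v⁻¹ * w) ^ ((p-1)/(r-1)) := by
  have hr1 : (0:ℝ) < r - 1 := by linarith
  have hp1 : (0:ℝ) < p - 1 := by linarith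
  have hp0 : (0:ℝ) < p := by linarith
  have hA0 : (0:ℝ) < A := by linarith
  set lv := Real.log v with hlv
  set lm := Real.log m with hlm
  set ls := Real.log s with hls
  set lw := Real.log w with hlw
  set la := Real.log A with hla
  refine (Real.log_le_log_iff (by positivity) (by positivity)).mp ?_
  have LHSeq : Real.log (v⁻¹ * s) = -lv + ls := by
    rw [Real.log_mul (by positivity) hs.ne', Real.log_inv]
  have RHSeq : Real.log (A ^ (1/(r-1)) * (v⁻¹ * w) ^ ((p-1)/(r-1)))
      = (1/(r-1)) * la + ((p-1)/(r-1)) * (-lv + lw) := by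
    rw [Real.log_mul (by positivity) (by positivity), Real.log_rpow hA0,
      Real.log_rpow (by positivity), Real.log_mul (by positivity) hw.ne', Real.log_inv]
  rw [LHSeq, RHSeq]
  have L1 : (-lv + lm) + (r-1) * (-lv + ls) ≤ la := by
    have h := Real.log_le_log (by positivity) h1
    rw [Real.log_mul (by positivity) (by positivity), Real.log_rpow (by positivity),
      Real.log_mul (by positivity) hm.ne', Real.log_mul (by positivity) hs.ne',
      Real.log_inv] at h
    linarith
  have L2 : p * lv ≤ lm + (p-1) * lw := by
    have h := Real.log_le_log hv h2
    rw [Real.log_mul (by positivity) (by positivity), Real.log_rpow hm,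
      Real.log_rpow hw] at h
    have h' := mul_le_mul_of_nonneg_left h hp0.le
    have e1 : p * (1/p * lm + (p-1)/p * lw) = lm + (p-1) * lw := by
      field_simp
    linarith
  have key : (r-1) * (-lv + ls) ≤ la + (p-1) * (-lv + lw) := by
    have e2 : (p-1) * (-lv + lw) = (p-1) * lw - (p * lv - lv) := by ring
    linarith
  have final : -lv + ls ≤ (la + (p-1) * (-lv + lw)) / (r-1) := by
    rw [le_div_iff₀ hr1]
    nlinarith [key]
  have e3 : (la + (p-1) * (-lv + lw)) / (r-1)
      = (1/(r-1)) * la + ((p-1)/(r-1)) * (-lv + lw) := by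
    field_simp
  linarith

private lemma alg2 {r p A v s w e we : ℝ} (hr : 1 < r) (hrp : r < p) (hA : 1 ≤ A)
    (hv : 0 < v) (hs : 0 < s) (hw : 0 < w) (he : 0 < e) (hwe : 0 ≤ we)
    (h3 : we ≤ s ^ ((r-1)/(p-1)) * e ^ ((p-r)/(p-1)))
    (h1 : v⁻¹ * s ≤ A ^ (1/(r-1)) * (v⁻¹ * w) ^ ((p-1)/(r-1))) :
    we ≤ A ^ (1/(p-1)) * (e/v) ^ ((p-r)/(p-1)) * w := by
  have hr1 : (0:ℝ) < r - 1 := by linarith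
  have hp1 : (0:ℝ) < p - 1 := by linarith
  have hpr : (0:ℝ) < p - r := by linarith
  have hA0 : (0:ℝ) < A := by linarith
  rcases eq_or_lt_of_le hwe with h0 | hwe0
  · have : (0:ℝ) ≤ A ^ (1/(p-1)) * (e/v) ^ ((p-r)/(p-1)) * w := by positivity
    linarith
  set lv := Real.log v with hlv
  set ls := Real.log s with hls
  set lw := Real.log w with hlw
  set la := Real.log A with hla
  set le := Real.log e with hle
  set lwe := Real.log we with hlwe
  refine (Real.log_le_log_iff hwe0 (by positivity)).mp ?_
  have RHSeq : Real.log (A ^ (1/(p-1)) * (e/v) ^ ((p-r)/(p-1)) * w)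
      = (1/(p-1)) * la + ((p-r)/(p-1)) * (le - lv) + lw := by
    rw [Real.log_mul (by positivity) hw.ne', Real.log_mul (by positivity) (by positivity),
      Real.log_rpow hA0, Real.log_rpow (by positivity), Real.log_div he.ne' hv.ne']
  rw [RHSeq]
  have L3 : (p-1) * lwe ≤ (r-1) * ls + (p-r) * le := by
    have h := Real.log_le_log hwe0 h3
    rw [Real.log_mul (by positivity) (by positivity), Real.log_rpow hs,
      Real.log_rpow he] at h
    have h' := mul_le_mul_of_nonneg_left h hp1.le
    have e1 : (p-1) * ((r-1)/(p-1) * ls + (p-r)/(p-1) * le) = (r-1) * ls + (p-r) * le := by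
      field_simp
    linarith
  have L1 : (r-1) * ls ≤ la + (p-1) * lw - (p-r) * lv := by
    have h := Real.log_le_log (by positivity) h1
    rw [Real.log_mul (by positivity) hs.ne',
      Real.log_mul (by positivity) (by positivity), Real.log_rpow hA0,
      Real.log_rpow (by positivity), Real.log_mul (by positivity) hw.ne',
      Real.log_inv] at h
    have h' := mul_le_mul_of_nonneg_left h hr1.le
    have e2 : (r-1) * (1/(r-1) * la + (p-1)/(r-1) * (-lv + lw))
        = la + (p-1) * (-lv + lw) := by
      field_simp
    have e3 : (r-1) * (-lv + ls) = (r-1) * ls - (r-1) * lv := by ring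
    have e4 : (p-1) * (-lv + lw) = (p-1) * lw - (p-1) * lv := by ring
    have e5 : (p-1) * lv - (r-1) * lv = (p-r) * lv := by ring
    linarith
  have key : (p-1) * lwe ≤ la + (p-r) * le - (p-r) * lv + (p-1) * lw := by linarith
  have final : lwe ≤ (la + (p-r) * le - (p-r) * lv + (p-1) * lw) / (p-1) := by
    rw [le_div_iff₀ hp1]
    nlinarith [key]
  have e6 : (la + (p-r) * le - (p-r) * lv + (p-1) * lw) / (p-1)
      = (1/(p-1)) * la + ((p-r)/(p-1)) * (le - lv) + lw := by
    field_simp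
    ring
  linarith


/-- if `μ` satisfies the `A_r` condition on `Δ` with constant `A`, then the
dual weight `w = μ^{-1/(p-1)}` satisfies the reverse Hölder inequality with exponent
`α = (p-1)/(r-1)` and the measure comparison with exponent `θ = (p-r)/(p-1)`. -/
theorem statement13 {X : Type*} [MeasurableSpace X] (ν : Measure X)
    (Δ : Set X) (hΔm : MeasurableSet Δ) (hΔ0 : 0 < ν Δ) (hΔfin : ν Δ < ⊤)
    (μ : X → ℝ) (hμmeas : Measurable μ) (hμnn : ∀ x, 0 ≤ μ x)
    (hμpos : ∀ᵐ x ∂ν.restrict Δ, 0 < μ x)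
    (r p : ℝ) (hr : 1 < r) (hrp : r < p)
    (hμint0 : 0 < ∫⁻ x in Δ, ENNReal.ofReal (μ x) ∂ν)
    (hμint : ∫⁻ x in Δ, ENNReal.ofReal (μ x) ∂ν < ⊤)
    (hμint' : ∫⁻ x in Δ, ENNReal.ofReal (μ x ^ (-(1 / (r - 1)))) ∂ν < ⊤)
    (A : ℝ) (hA : 1 ≤ A)
    (hAr : ((ν Δ)⁻¹ * ∫⁻ x in Δ, ENNReal.ofReal (μ x) ∂ν) *
        ((ν Δ)⁻¹ * ∫⁻ x in Δ, ENNReal.ofReal (μ x ^ (-(1 / (r - 1)))) ∂ν) ^ (r - 1)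
        ≤ ENNReal.ofReal A) :
    ((ν Δ)⁻¹ * ∫⁻ x in Δ, ENNReal.ofReal ((μ x ^ (-(1 / (p - 1)))) ^ ((p - 1) / (r - 1))) ∂ν
        ≤ ENNReal.ofReal (A ^ (1 / (r - 1))) *
          ((ν Δ)⁻¹ * ∫⁻ x in Δ, ENNReal.ofReal (μ x ^ (-(1 / (p - 1)))) ∂ν)
            ^ ((p - 1) / (r - 1))) ∧
    ∀ E ⊆ Δ, MeasurableSet E →
      (∫⁻ x in E, ENNReal.ofReal (μ x ^ (-(1 / (p - 1)))) ∂ν)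
        ≤ ENNReal.ofReal (A ^ (1 / (p - 1))) * (ν E / ν Δ) ^ ((p - r) / (p - 1)) *
          ∫⁻ x in Δ, ENNReal.ofReal (μ x ^ (-(1 / (p - 1)))) ∂ν := by
  have hr1 : (0:ℝ) < r - 1 := by linarith
  have hp1 : (0:ℝ) < p - 1 := by linarith
  have hpr : (0:ℝ) < p - r := by linarith
  have hp0 : (0:ℝ) < p := by linarith
  have hA0 : (0:ℝ) < A := by linarith
  -- measurability
  have hmc : ∀ c : ℝ, Measurable fun x => ENNReal.ofReal (μ x ^ c) := by
    intro c; fun_prop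
  -- positivity of integrals of powers
  have posint : ∀ c : ℝ, 0 < ∫⁻ x in Δ, ENNReal.ofReal (μ x ^ c) ∂ν := by
    intro c
    by_contra h
    rw [not_lt, le_zero_iff, lintegral_eq_zero_iff (hmc c)] at h
    have hFalse : ∀ᵐ x ∂ν.restrict Δ, False := by
      filter_upwards [h, hμpos] with x hx hxpos
      have hxp : 0 < μ x ^ c := Real.rpow_pos_of_pos hxpos c
      simp only [Pi.zero_apply, ENNReal.ofReal_eq_zero] at hx
      linarith
    have h0 := ae_iff.mp hFalse
    simp only [not_false_eq_true, Set.setOf_true, Measure.restrict_apply_univ] at h0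
    exact hΔ0.ne' h0
  -- pointwise identity for the reverse-Hölder integrand
  have hpt : ∀ x, ENNReal.ofReal ((μ x ^ (-(1 / (p - 1)))) ^ ((p - 1) / (r - 1)))
      = ENNReal.ofReal (μ x ^ (-(1 / (r - 1)))) := by
    intro x
    congr 1
    rw [← Real.rpow_mul (hμnn x)]
    congr 1
    field_simp
  set V := ν Δ with hVdef
  set M := ∫⁻ x in Δ, ENNReal.ofReal (μ x) ∂ν with hMdef
  set S := ∫⁻ x in Δ, ENNReal.ofReal (μ x ^ (-(1 / (r - 1)))) ∂ν with hSdef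
  set W := ∫⁻ x in Δ, ENNReal.ofReal (μ x ^ (-(1 / (p - 1)))) ∂ν with hWdef
  have hIrw : ∫⁻ x in Δ, ENNReal.ofReal ((μ x ^ (-(1 / (p - 1)))) ^ ((p - 1) / (r - 1))) ∂ν
      = S := lintegral_congr fun x => hpt x
  have hV0 : V ≠ 0 := hΔ0.ne'
  have hVtop : V ≠ ⊤ := hΔfin.ne
  have hM0 : M ≠ 0 := hμint0.ne'
  have hMtop : M ≠ ⊤ := hμint.ne
  have hS0 : S ≠ 0 := (posint _).ne'
  have hStop : S ≠ ⊤ := hμint'.ne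
  have hW0 : W ≠ 0 := (posint _).ne'
  -- Hölder with exponents p, p/(p-1)
  have hpq : Real.HolderConjugate p (p/(p-1)) := by
    exact (Real.holderConjugate_iff_eq_conjExponent (by linarith)).mpr rfl
  have hold1 : V ≤ M ^ (1/p) * W ^ ((p-1)/p) := by
    have hH := ENNReal.lintegral_mul_le_Lp_mul_Lq (ν.restrict Δ) hpq
      (f := fun x => ENNReal.ofReal (μ x ^ (1/p)))
      (g := fun x => ENNReal.ofReal (μ x ^ (-(1/p))))
      (hmc _).aemeasurable (hmc _).aemeasurable
    have hfg : ∫⁻ x in Δ,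
        ((fun x => ENNReal.ofReal (μ x ^ (1/p))) * fun x => ENNReal.ofReal (μ x ^ (-(1/p)))) x ∂ν
        = V := by
      rw [hVdef, ← setLIntegral_one]
      refine lintegral_congr_ae ?_
      filter_upwards [hμpos] with x hx
      simp only [Pi.mul_apply]
      rw [← ENNReal.ofReal_mul (Real.rpow_nonneg (hμnn x) _), ← Real.rpow_add hx,
        add_neg_cancel, Real.rpow_zero, ENNReal.ofReal_one]
    have hfp : ∫⁻ x in Δ, (fun x => ENNReal.ofReal (μ x ^ (1/p))) x ^ p ∂ν = M := by
      refine lintegral_congr fun x => ?_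
      rw [ENNReal.ofReal_rpow_of_nonneg (Real.rpow_nonneg (hμnn x) _) hp0.le,
        ← Real.rpow_mul (hμnn x), one_div_mul_cancel hp0.ne', Real.rpow_one]
    have hgq : ∫⁻ x in Δ, (fun x => ENNReal.ofReal (μ x ^ (-(1/p)))) x ^ (p/(p-1)) ∂ν = W := by
      refine lintegral_congr fun x => ?_
      rw [ENNReal.ofReal_rpow_of_nonneg (Real.rpow_nonneg (hμnn x) _) (by positivity),
        ← Real.rpow_mul (hμnn x)]
      congr 2
      field_simp
    rw [hfg, hfp, hgq] at hH
    have hexp : 1/(p/(p-1)) = (p-1)/p := one_div_div _ _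
    rwa [hexp] at hH
  -- Hölder with exponents (p-1)/(r-1) and its conjugate
  have hab : Real.HolderConjugate ((p-1)/(r-1)) ((p-1)/(p-r)) := by
    rw [Real.holderConjugate_iff_eq_conjExponent (by rw [lt_div_iff₀ hr1]; linarith)]
    have hsub : (p-1)/(r-1) - 1 = (p-r)/(r-1) := by field_simp; ring
    rw [hsub]
    field_simp
  have hold2 : ∀ E : Set X, E ⊆ Δ →
      (∫⁻ x in E, ENNReal.ofReal (μ x ^ (-(1 / (p - 1)))) ∂ν)
        ≤ S ^ ((r-1)/(p-1)) * (ν E) ^ ((p-r)/(p-1)) := by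
    intro E hE
    have hH := ENNReal.lintegral_mul_le_Lp_mul_Lq (ν.restrict E) hab
      (f := fun x => ENNReal.ofReal (μ x ^ (-(1/(p-1)))))
      (g := fun _ => (1:ℝ≥0∞)) (hmc _).aemeasurable aemeasurable_const
    simp only [Pi.mul_apply, mul_one, ENNReal.one_rpow, lintegral_one,
      Measure.restrict_apply_univ] at hH
    have hfp : ∫⁻ x in E, ENNReal.ofReal (μ x ^ (-(1/(p-1)))) ^ ((p-1)/(r-1)) ∂ν
        ≤ S := by
      have heq : ∀ x, ENNReal.ofReal (μ x ^ (-(1/(p-1)))) ^ ((p-1)/(r-1))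
          = ENNReal.ofReal (μ x ^ (-(1 / (r - 1)))) := by
        intro x
        rw [ENNReal.ofReal_rpow_of_nonneg (Real.rpow_nonneg (hμnn x) _) (by positivity)]
        exact hpt x
      rw [lintegral_congr heq, hSdef]
      exact lintegral_mono' (Measure.restrict_mono hE le_rfl) le_rfl
    have hexp1 : 1/((p-1)/(r-1)) = (r-1)/(p-1) := one_div_div _ _
    have hexp2 : 1/((p-1)/(p-r)) = (p-r)/(p-1) := one_div_div _ _
    rw [hexp1, hexp2] at hH
    refine hH.trans (mul_le_mul_left (ENNReal.rpow_le_rpow hfp (by positivity)) _)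
  have hWtop : W ≠ ⊤ := by
    have h := hold2 Δ le_rfl
    rw [← hWdef, ← hVdef] at h
    exact (h.trans_lt (ENNReal.mul_lt_top
      (ENNReal.rpow_lt_top_of_nonneg (by positivity) hStop)
      (ENNReal.rpow_lt_top_of_nonneg (by positivity) hVtop))).ne
  -- real versions
  set vR := V.toReal with hvRdef
  set mR := M.toReal with hmRdef
  set sR := S.toReal with hsRdef
  set wR := W.toReal with hwRdef
  have hvR : 0 < vR := ENNReal.toReal_pos hV0 hVtop
  have hmR : 0 < mR := ENNReal.toReal_pos hM0 hMtop
  have hsR : 0 < sR := ENNReal.toReal_pos hS0 hStop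
  have hwR : 0 < wR := ENNReal.toReal_pos hW0 hWtop
  have hArR : (vR⁻¹ * mR) * (vR⁻¹ * sR) ^ (r - 1) ≤ A := by
    have h := ENNReal.toReal_mono ENNReal.ofReal_ne_top hAr
    rw [ENNReal.toReal_ofReal hA0.le] at h
    simp only [ENNReal.toReal_mul, ENNReal.toReal_inv, ← ENNReal.toReal_rpow] at h
    exact h
  have hold1R : vR ≤ mR ^ (1/p) * wR ^ ((p-1)/p) := by
    have h := ENNReal.toReal_mono (ENNReal.mul_ne_top
      (ENNReal.rpow_ne_top_of_nonneg (by positivity) hMtop)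
      (ENNReal.rpow_ne_top_of_nonneg (by positivity) hWtop)) hold1
    simp only [ENNReal.toReal_mul, ← ENNReal.toReal_rpow] at h
    exact h
  have hiR : vR⁻¹ * sR ≤ A ^ (1/(r-1)) * (vR⁻¹ * wR) ^ ((p-1)/(r-1)) :=
    alg1 hr hrp hA hvR hmR hsR hwR hArR hold1R
  have goal1 : V⁻¹ * S ≤ ENNReal.ofReal (A ^ (1/(r-1))) * (V⁻¹ * W) ^ ((p-1)/(r-1)) := by
    rw [← ENNReal.toReal_le_toReal
      (ENNReal.mul_ne_top (ENNReal.inv_ne_top.mpr hV0) hStop)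
      (ENNReal.mul_ne_top ENNReal.ofReal_ne_top
        (ENNReal.rpow_ne_top_of_nonneg (by positivity)
          (ENNReal.mul_ne_top (ENNReal.inv_ne_top.mpr hV0) hWtop)))]
    simp only [ENNReal.toReal_mul, ENNReal.toReal_inv, ← ENNReal.toReal_rpow,
      ENNReal.toReal_ofReal (by positivity : (0:ℝ) ≤ A ^ (1/(r-1)))]
    exact hiR
  constructor
  · rw [hIrw]
    exact goal1
  · intro E hE hEm
    rcases eq_or_ne (ν E) 0 with h0 | h0
    · rw [Measure.restrict_eq_zero.mpr h0]
      simp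
    · have hEfin : ν E ≠ ⊤ := ((measure_mono hE).trans_lt hΔfin).ne
      set WE := ∫⁻ x in E, ENNReal.ofReal (μ x ^ (-(1 / (p - 1)))) ∂ν with hWEdef
      have hWEle : WE ≤ W := lintegral_mono' (Measure.restrict_mono hE le_rfl) le_rfl
      have hWEtop : WE ≠ ⊤ := (hWEle.trans_lt hWtop.lt_top).ne
      set eR := (ν E).toReal with heRdef
      set weR := WE.toReal with hweRdef
      have heR : 0 < eR := ENNReal.toReal_pos h0 hEfin
      have h3R : weR ≤ sR ^ ((r-1)/(p-1)) * eR ^ ((p-r)/(p-1)) := by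
        have h := ENNReal.toReal_mono (ENNReal.mul_ne_top
          (ENNReal.rpow_ne_top_of_nonneg (by positivity) hStop)
          (ENNReal.rpow_ne_top_of_nonneg (by positivity) hEfin)) (hold2 E hE)
        simp only [ENNReal.toReal_mul, ← ENNReal.toReal_rpow] at h
        exact h
      have hiiR : weR ≤ A ^ (1/(p-1)) * (eR/vR) ^ ((p-r)/(p-1)) * wR :=
        alg2 hr hrp hA hvR hsR hwR heR ENNReal.toReal_nonneg h3R hiR
      rw [← ENNReal.toReal_le_toReal hWEtop
        (ENNReal.mul_ne_top (ENNReal.mul_ne_top ENNReal.ofReal_ne_top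
          (ENNReal.rpow_ne_top_of_nonneg (by positivity)
            ((ENNReal.div_lt_top hEfin hV0).ne)))
          hWtop)]
      simp only [ENNReal.toReal_mul, ENNReal.toReal_div, ← ENNReal.toReal_rpow,
        ENNReal.toReal_ofReal (by positivity : (0:ℝ) ≤ A ^ (1/(p-1)))]
      exact hiiR
end
end
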